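/- arXiv:1407.1473 — 3 statements merged into one kernel-verified Lean document; each statement's English description precedes it below -/
import Mathlib

section
/- Let S be a 0-simplifying Tarski monoid, let F ⊆ E(S) be an ultrafilter of the Boolean algebra E(S), and let e ∈ F. Then there exists an element a ∈ S such that a² = 0 and a ≠ 0 (a is an infinitesimal), a⁻¹a ∈ F, and a ∈ eSe. -/
universe u

/-- An inverse monoid with zero: every element `a` has a unique generalized
inverse `a⁻¹`, and `0` is an absorbing element. -/
class InverseMonoidWithZero (S : Type u) extends Monoid S, Zero S, Inv S where
  zero_mul' : ∀ a : S, 0 * a = 0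
  mul_zero' : ∀ a : S, a * 0 = 0
  mul_inv_mul : ∀ a : S, a * a⁻¹ * a = a
  inv_mul_inv : ∀ a : S, a⁻¹ * a * a⁻¹ = a⁻¹
  inv_unique : ∀ a b : S, a * b * a = a → b * a * b = b → b = a⁻¹

section BasicDefs

variable {S : Type u}

/-- The natural partial order: `a ≤ b` iff `a = e * b` for some idempotent `e`. -/
def nle [InverseMonoidWithZero S] (a b : S) : Prop :=
  ∃ e : S, e * e = e ∧ a = e * b

/-- `a` and `b` are compatible if `a * b⁻¹` and `a⁻¹ * b` are idempotents. -/
def Compat [InverseMonoidWithZero S] (a b : S) : Prop :=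
  (a * b⁻¹) * (a * b⁻¹) = a * b⁻¹ ∧ (a⁻¹ * b) * (a⁻¹ * b) = a⁻¹ * b

/-- `a` and `b` are orthogonal if `a * b⁻¹ = 0` and `a⁻¹ * b = 0`. -/
def Orth [InverseMonoidWithZero S] (a b : S) : Prop :=
  a * b⁻¹ = 0 ∧ a⁻¹ * b = 0

end BasicDefs

/-- A distributive inverse monoid: every compatible pair has a join (for the
natural partial order), recorded by `sup`, and multiplication distributes over
these binary joins. -/
class DistributiveInverseMonoid (S : Type u) extends InverseMonoidWithZero S where
  sup : S → S → S
  le_sup_left : ∀ a b : S, Compat a b → nle a (sup a b)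
  le_sup_right : ∀ a b : S, Compat a b → nle b (sup a b)
  sup_le : ∀ a b c : S, Compat a b → nle a c → nle b c → nle (sup a b) c
  mul_sup : ∀ a b c : S, Compat a b → c * sup a b = sup (c * a) (c * b)
  sup_mul : ∀ a b c : S, Compat a b → sup a b * c = sup (a * c) (b * c)

/-- A Boolean inverse monoid: a distributive inverse monoid whose idempotents
form a Boolean algebra under the natural partial order; `compl` records the
complementation on idempotents. -/
class BooleanInverseMonoid (S : Type u) extends DistributiveInverseMonoid S where
  compl : S → S
  compl_idem : ∀ e : S, e * e = e → compl e * compl e = compl e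
  mul_compl : ∀ e : S, e * e = e → e * compl e = 0
  sup_compl : ∀ e : S, e * e = e → sup e (compl e) = 1

/-- A Boolean inverse ∧-monoid: a Boolean inverse monoid in which every pair of
elements has a meet with respect to the natural partial order. -/
class BooleanInverseMeetMonoid (S : Type u) extends BooleanInverseMonoid S where
  inf : S → S → S
  inf_le_left : ∀ a b : S, nle (inf a b) a
  inf_le_right : ∀ a b : S, nle (inf a b) b
  le_inf : ∀ a b c : S, nle c a → nle c b → nle c (inf a b)

section MoreDefs

variable {S : Type u}

/-- The join of a compatible pair. -/
def bsup [DistributiveInverseMonoid S] (a b : S) : S := DistributiveInverseMonoid.sup a b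

/-- Complementation in the Boolean algebra of idempotents. -/
def bcompl [BooleanInverseMonoid S] (e : S) : S := BooleanInverseMonoid.compl e

/-- The binary meet. -/
def binf [BooleanInverseMeetMonoid S] (a b : S) : S := BooleanInverseMeetMonoid.inf a b

/-- The fixed-point operator `φ(s) = s ∧ 1`. -/
def phi [BooleanInverseMeetMonoid S] (s : S) : S := binf s 1

/-- The support operator `σ(s) = \overline{φ(s)} ⋅ s⁻¹ s`. -/
def sigma [BooleanInverseMeetMonoid S] (s : S) : S := bcompl (phi s) * (s⁻¹ * s)

/-- An infinitesimal is a non-zero element that squares to zero. -/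
def Infinitesimal [InverseMonoidWithZero S] (a : S) : Prop := a ≠ 0 ∧ a * a = 0

/-- A (two-sided) ideal. -/
def IsMIdeal [InverseMonoidWithZero S] (I : Set S) : Prop :=
  I.Nonempty ∧ ∀ a ∈ I, ∀ s : S, s * a ∈ I ∧ a * s ∈ I

/-- A ∨-ideal: an ideal closed under joins of compatible pairs. -/
def IsVIdeal [DistributiveInverseMonoid S] (I : Set S) : Prop :=
  IsMIdeal I ∧ ∀ a ∈ I, ∀ b ∈ I, Compat a b → bsup a b ∈ I

end MoreDefs

/-- 0-simplifying: the only ∨-ideals are `{0}` and `S`. -/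
def ZeroSimplifying (S : Type u) [DistributiveInverseMonoid S] : Prop :=
  ∀ I : Set S, IsVIdeal I → I = {0} ∨ I = Set.univ

/-- 0-simple: non-trivial and the only ideals are `{0}` and `S`. -/
def ZeroSimple (S : Type u) [InverseMonoidWithZero S] : Prop :=
  (∃ s : S, s ≠ 0) ∧ ∀ I : Set S, IsMIdeal I → I = {0} ∨ I = Set.univ

/-- Fundamental: every element commuting with all idempotents is an idempotent. -/
def Fundamental (S : Type u) [InverseMonoidWithZero S] : Prop :=
  ∀ a : S, (∀ e : S, e * e = e → a * e = e * a) → a * a = a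

/-- The Boolean algebra of idempotents is atomless. -/
def IdemAtomless (S : Type u) [InverseMonoidWithZero S] : Prop :=
  ∀ e : S, e * e = e → e ≠ 0 → ∃ f : S, f * f = f ∧ f ≠ 0 ∧ nle f e ∧ f ≠ e

section Filters

variable {S : Type u}

/-- A filter in a Boolean inverse ∧-monoid: a nonempty subset closed under
binary meets and upward closed in the natural partial order. -/
def IsMFilter [BooleanInverseMeetMonoid S] (A : Set S) : Prop :=
  A.Nonempty ∧ (∀ a ∈ A, ∀ b ∈ A, binf a b ∈ A) ∧ ∀ a ∈ A, ∀ b : S, nle a b → b ∈ A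

/-- An ultrafilter: a maximal proper filter. -/
def IsMUltrafilter [BooleanInverseMeetMonoid S] (A : Set S) : Prop :=
  IsMFilter A ∧ (0 : S) ∉ A ∧ ∀ B : Set S, IsMFilter B → (0 : S) ∉ B → A ⊆ B → A = B

/-- A filter of the Boolean algebra of idempotents (meet of idempotents is
their product). -/
def IsIdemFilter [InverseMonoidWithZero S] (F : Set S) : Prop :=
  F.Nonempty ∧ (∀ e ∈ F, e * e = e) ∧ (∀ e ∈ F, ∀ f ∈ F, e * f ∈ F) ∧
    ∀ e ∈ F, ∀ f : S, f * f = f → nle e f → f ∈ F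

/-- An ultrafilter of the Boolean algebra of idempotents. -/
def IsIdemUltrafilter [InverseMonoidWithZero S] (F : Set S) : Prop :=
  IsIdemFilter F ∧ (0 : S) ∉ F ∧
    ∀ G : Set S, IsIdemFilter G → (0 : S) ∉ G → F ⊆ G → F = G

end Filters

section PencilDefs

variable {S : Type u}

/-- `Preceq e f`: there is a pencil from `e` to `f`, i.e. finitely many
elements `x₁, …, xₘ` with `r(xᵢ) ≤ f` for all `i` and `e = ⋁ d(xᵢ)`
(a least upper bound for the natural partial order). -/
def Preceq [DistributiveInverseMonoid S] (e f : S) : Prop :=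
  ∃ l : List S, l ≠ [] ∧ (∀ x ∈ l, nle (x * x⁻¹) f) ∧
    (∀ x ∈ l, nle (x⁻¹ * x) e) ∧ ∀ c : S, (∀ x ∈ l, nle (x⁻¹ * x) c) → nle e c

/-- Piecewise factorizable: every element is a finite join of elements each of
which lies beneath a unit. -/
def PiecewiseFactorizable (S : Type u) [DistributiveInverseMonoid S] : Prop :=
  ∀ s : S, ∃ l : List S, l ≠ [] ∧ (∀ x ∈ l, ∃ g : S, IsUnit g ∧ nle x g) ∧
    (∀ x ∈ l, nle x s) ∧ ∀ c : S, (∀ x ∈ l, nle x c) → nle s c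

/-- A properly infinite idempotent. -/
def ProperlyInfinite [DistributiveInverseMonoid S] (e : S) : Prop :=
  ∃ x y : S, x⁻¹ * x = e ∧ y⁻¹ * y = e ∧ Orth (x * x⁻¹) (y * y⁻¹) ∧
    nle (bsup (x * x⁻¹) (y * y⁻¹)) e

end PencilDefs

/-- Purely infinite: every non-zero idempotent is properly infinite. -/
def PurelyInfinite (S : Type u) [DistributiveInverseMonoid S] : Prop :=
  ∀ e : S, e * e = e → e ≠ 0 → ProperlyInfinite e

section St7Base

variable {S : Type u} [InverseMonoidWithZero S]

lemma st7_mim (a : S) : a * a⁻¹ * a = a := InverseMonoidWithZero.mul_inv_mul a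
lemma st7_imi (a : S) : a⁻¹ * a * a⁻¹ = a⁻¹ := InverseMonoidWithZero.inv_mul_inv a
lemma st7_zm (a : S) : (0:S) * a = 0 := InverseMonoidWithZero.zero_mul' a
lemma st7_mz (a : S) : a * (0:S) = 0 := InverseMonoidWithZero.mul_zero' a

lemma st7_inv_inv (a : S) : a⁻¹⁻¹ = a :=
  (InverseMonoidWithZero.inv_unique a⁻¹ a (st7_imi a) (st7_mim a)).symm

lemma st7_idem_inv {e : S} (h : e * e = e) : e⁻¹ = e :=
  (InverseMonoidWithZero.inv_unique e e (by rw [h, h]) (by rw [h, h])).symm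

lemma st7_zero_inv : (0:S)⁻¹ = 0 := st7_idem_inv (st7_mz 0)

lemma st7_dom_idem (a : S) : (a⁻¹ * a) * (a⁻¹ * a) = a⁻¹ * a := by
  have : a⁻¹ * a * (a⁻¹ * a) = a⁻¹ * (a * a⁻¹ * a) := by simp [mul_assoc]
  rw [this, st7_mim]

lemma st7_ran_idem (a : S) : (a * a⁻¹) * (a * a⁻¹) = a * a⁻¹ := by
  have : a * a⁻¹ * (a * a⁻¹) = (a * a⁻¹ * a) * a⁻¹ := by simp [mul_assoc]
  rw [this, st7_mim]

/-- product of idempotents is idempotent -/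
lemma st7_idem_mul {e f : S} (he : e * e = e) (hf : f * f = f) :
    (e * f) * (e * f) = e * f := by
  set x := (e * f)⁻¹ with hx
  have h1 : f * x * e = x := by
    apply InverseMonoidWithZero.inv_unique (e * f) (f * x * e)
    · have : e * f * (f * x * e) * (e * f) = e * (f * f) * x * (e * e) * f := by
        simp [mul_assoc]
      rw [this, he, hf]
      have : e * f * x * e * f = (e * f) * (e*f)⁻¹ * (e * f) := by simp [mul_assoc, hx]
      rw [this, st7_mim]
    · have : f * x * e * (e * f) * (f * x * e) = f * (x * (e * (e * (f * (f * x)))))* e := by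
        simp [mul_assoc]
      rw [this]
      have he' : e * (e * (f * (f * x))) = e * (f * x) := by
        rw [← mul_assoc e e, he, ← mul_assoc f f, hf]
      rw [he']
      have : f * (x * (e * (f * x))) * e = f * ((e*f)⁻¹ * (e*f) * (e*f)⁻¹) * e := by
        simp [mul_assoc, hx]
      rw [this, st7_imi]
  have hxidem : x * x = x := by
    conv_lhs => rw [← h1]
    have : f * x * e * (f * x * e) = f * ((e*f)⁻¹ * (e * f) * (e*f)⁻¹) * e := by
      simp [mul_assoc, hx]
    rw [this, st7_imi, ← hx, h1]
  have : e * f = x⁻¹ := by rw [hx, st7_inv_inv]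
  rw [this, st7_idem_inv hxidem]
  exact hxidem

lemma st7_idem_comm {e f : S} (he : e * e = e) (hf : f * f = f) :
    e * f = f * e := by
  have hef : (e * f) * (e * f) = e * f := st7_idem_mul he hf
  have hfe : (f * e) * (f * e) = f * e := st7_idem_mul hf he
  have h1 : f * e = (e * f)⁻¹ := by
    apply InverseMonoidWithZero.inv_unique
    · have : e * f * (f * e) * (e * f) = e * (f * f) * (e * e) * f := by simp [mul_assoc]
      rw [this, he, hf]
      have : e * f * e * f = (e*f)*(e*f) := by simp [mul_assoc]
      rw [this, hef]
    · have : f * e * (e * f) * (f * e) = f * (e * e) * (f * f) * e := by simp [mul_assoc]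
      rw [this, he, hf]
      have : f * e * f * e = (f*e)*(f*e) := by simp [mul_assoc]
      rw [this, hfe]
  rw [h1, st7_idem_inv hef]

lemma st7_mul_inv_rev (a b : S) : (a * b)⁻¹ = b⁻¹ * a⁻¹ := by
  symm
  apply InverseMonoidWithZero.inv_unique
  · have : a * b * (b⁻¹ * a⁻¹) * (a * b) = a * ((b * b⁻¹) * (a⁻¹ * a)) * b := by
      simp [mul_assoc]
    rw [this, st7_idem_comm (st7_ran_idem b) (st7_dom_idem a)]
    have : a * (a⁻¹ * a * (b * b⁻¹)) * b = (a * a⁻¹ * a) * (b * b⁻¹ * b) := by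
      simp [mul_assoc]
    rw [this, st7_mim, st7_mim]
  · have : b⁻¹ * a⁻¹ * (a * b) * (b⁻¹ * a⁻¹) = b⁻¹ * ((a⁻¹ * a) * (b * b⁻¹)) * a⁻¹ := by
      simp [mul_assoc]
    rw [this, st7_idem_comm (st7_dom_idem a) (st7_ran_idem b)]
    have : b⁻¹ * (b * b⁻¹ * (a⁻¹ * a)) * a⁻¹ = (b⁻¹ * b * b⁻¹) * (a⁻¹ * a * a⁻¹) := by
      simp [mul_assoc]
    rw [this, st7_imi, st7_imi]

/-- conjugate of an idempotent is idempotent -/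
lemma st7_conj_idem {p : S} (hp : p * p = p) (s : S) :
    (s * p * s⁻¹) * (s * p * s⁻¹) = s * p * s⁻¹ := by
  have h1 : (s * p * s⁻¹) * (s * p * s⁻¹) = s * ((p * (s⁻¹ * s)) * p) * s⁻¹ := by
    simp [mul_assoc]
  rw [h1, st7_idem_comm hp (st7_dom_idem s)]
  have : s * (s⁻¹ * s * p * p) * s⁻¹ = (s * s⁻¹ * s) * (p * p) * s⁻¹ := by
    simp [mul_assoc]
  rw [this, st7_mim, hp]

end St7Base

section St7Order

variable {S : Type u} [InverseMonoidWithZero S]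

lemma st7_swap {p q : S} (h : p * q = q * p) (x : S) : p * (q * x) = q * (p * x) := by
  rw [← mul_assoc, h, mul_assoc]

lemma st7_collapse {p : S} (hp : p * p = p) (x : S) : p * (p * x) = p * x := by
  rw [← mul_assoc, hp]

lemma st7_mim1 (a : S) : a * (a⁻¹ * a) = a := by rw [← mul_assoc, st7_mim]

lemma st7_mim2 (a x : S) : a * (a⁻¹ * (a * x)) = a * x := by
  rw [← mul_assoc, ← mul_assoc, st7_mim]

lemma st7_imi1 (a : S) : a⁻¹ * (a * a⁻¹) = a⁻¹ := by rw [← mul_assoc, st7_imi]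

lemma st7_imi2 (a x : S) : a⁻¹ * (a * (a⁻¹ * x)) = a⁻¹ * x := by
  rw [← mul_assoc, ← mul_assoc, st7_imi]

lemma st7_swap_ri {k : S} (hk : k * k = k) (b x : S) :
    b * (b⁻¹ * (k * x)) = k * (b * (b⁻¹ * x)) := by
  calc b * (b⁻¹ * (k * x)) = ((b * b⁻¹) * k) * x := by simp [mul_assoc]
    _ = (k * (b * b⁻¹)) * x := by rw [st7_idem_comm (st7_ran_idem b) hk]
    _ = k * (b * (b⁻¹ * x)) := by simp [mul_assoc]

lemma st7_swap_ri0 {k : S} (hk : k * k = k) (b : S) :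
    b * (b⁻¹ * k) = k * (b * b⁻¹) := by
  calc b * (b⁻¹ * k) = (b * b⁻¹) * k := by simp [mul_assoc]
    _ = k * (b * b⁻¹) := st7_idem_comm (st7_ran_idem b) hk

lemma st7_swap_di {k : S} (hk : k * k = k) (b x : S) :
    b⁻¹ * (b * (k * x)) = k * (b⁻¹ * (b * x)) := by
  calc b⁻¹ * (b * (k * x)) = ((b⁻¹ * b) * k) * x := by simp [mul_assoc]
    _ = (k * (b⁻¹ * b)) * x := by rw [st7_idem_comm (st7_dom_idem b) hk]
    _ = k * (b⁻¹ * (b * x)) := by simp [mul_assoc]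

lemma st7_swap_di0 {k : S} (hk : k * k = k) (b : S) :
    b⁻¹ * (b * k) = k * (b⁻¹ * b) := by
  calc b⁻¹ * (b * k) = (b⁻¹ * b) * k := by simp [mul_assoc]
    _ = k * (b⁻¹ * b) := st7_idem_comm (st7_dom_idem b) hk

lemma st7_swap_rr (a b x : S) :
    a * (a⁻¹ * (b * (b⁻¹ * x))) = b * (b⁻¹ * (a * (a⁻¹ * x))) := by
  calc a * (a⁻¹ * (b * (b⁻¹ * x))) = ((a * a⁻¹) * (b * b⁻¹)) * x := by simp [mul_assoc]
    _ = ((b * b⁻¹) * (a * a⁻¹)) * x := by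
        rw [st7_idem_comm (st7_ran_idem a) (st7_ran_idem b)]
    _ = b * (b⁻¹ * (a * (a⁻¹ * x))) := by simp [mul_assoc]

lemma st7_swap_rr0 (a b : S) :
    a * (a⁻¹ * (b * b⁻¹)) = b * (b⁻¹ * (a * a⁻¹)) := by
  calc a * (a⁻¹ * (b * b⁻¹)) = (a * a⁻¹) * (b * b⁻¹) := by simp [mul_assoc]
    _ = (b * b⁻¹) * (a * a⁻¹) := st7_idem_comm (st7_ran_idem a) (st7_ran_idem b)
    _ = b * (b⁻¹ * (a * a⁻¹)) := by simp [mul_assoc]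

lemma st7_swap_dd0 (a b : S) :
    a⁻¹ * (a * (b⁻¹ * b)) = b⁻¹ * (b * (a⁻¹ * a)) := by
  calc a⁻¹ * (a * (b⁻¹ * b)) = (a⁻¹ * a) * (b⁻¹ * b) := by simp [mul_assoc]
    _ = (b⁻¹ * b) * (a⁻¹ * a) := st7_idem_comm (st7_dom_idem a) (st7_dom_idem b)
    _ = b⁻¹ * (b * (a⁻¹ * a)) := by simp [mul_assoc]

lemma st7_nle_refl (a : S) : nle a a :=
  ⟨a * a⁻¹, st7_ran_idem a, (st7_mim a).symm⟩

lemma st7_nle_zero (a : S) : nle (0:S) a :=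
  ⟨0, st7_mz 0, (st7_zm a).symm⟩

lemma st7_eq_zero_of_nle_zero {a : S} (h : nle a 0) : a = 0 := by
  obtain ⟨k, _, hk⟩ := h; rw [hk, st7_mz]

lemma st7_nle_iff_left {a b : S} : nle a b ↔ a = (a * a⁻¹) * b := by
  constructor
  · rintro ⟨k, hk, rfl⟩
    rw [st7_mul_inv_rev, st7_idem_inv hk]
    symm
    calc k * b * (b⁻¹ * k) * b = k * (b * (b⁻¹ * (k * b))) := by simp [mul_assoc]
      _ = k * (k * (b * (b⁻¹ * b))) := by rw [st7_swap_ri hk b b]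
      _ = k * (b * (b⁻¹ * b)) := st7_collapse hk _
      _ = k * b := by rw [st7_mim1]
  · intro h; exact ⟨a * a⁻¹, st7_ran_idem a, h⟩

lemma st7_nle_iff_right {a b : S} : nle a b ↔ a = b * (a⁻¹ * a) := by
  constructor
  · rintro ⟨k, hk, rfl⟩
    rw [st7_mul_inv_rev, st7_idem_inv hk]
    symm
    calc b * (b⁻¹ * k * (k * b)) = b * (b⁻¹ * (k * (k * b))) := by simp [mul_assoc]
      _ = b * (b⁻¹ * (k * b)) := by rw [st7_collapse hk]
      _ = k * (b * (b⁻¹ * b)) := by rw [st7_swap_ri hk b b]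
      _ = k * b := by rw [st7_mim1]
  · intro h
    refine ⟨a * a⁻¹, st7_ran_idem a, ?_⟩
    have hainv : a⁻¹ = (a⁻¹ * a) * b⁻¹ := by
      conv_lhs => rw [h]
      rw [st7_mul_inv_rev, st7_idem_inv (st7_dom_idem a)]
    have key : a * (a⁻¹ * b) = a := by
      conv_lhs => rw [hainv]
      calc a * ((a⁻¹ * a) * b⁻¹ * b) = a * (a⁻¹ * (a * (b⁻¹ * b))) := by simp [mul_assoc]
        _ = a * (b⁻¹ * b) := st7_mim2 a _
        _ = (b * (a⁻¹ * a)) * (b⁻¹ * b) := by rw [← h]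
        _ = b * (a⁻¹ * (a * (b⁻¹ * b))) := by simp [mul_assoc]
        _ = b * (b⁻¹ * (b * (a⁻¹ * a))) := by rw [st7_swap_dd0]
        _ = b * (a⁻¹ * a) := st7_mim2 b _
        _ = a := h.symm
    rw [mul_assoc]; exact key.symm

lemma st7_nle_trans {a b c : S} (hab : nle a b) (hbc : nle b c) : nle a c := by
  obtain ⟨k, hk, rfl⟩ := hab
  obtain ⟨m, hm, rfl⟩ := hbc
  exact ⟨k * m, st7_idem_mul hk hm, (mul_assoc k m c).symm⟩

lemma st7_nle_antisymm {a b : S} (hab : nle a b) (hba : nle b a) : a = b := by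
  have ha := st7_nle_iff_left.mp hab
  have hb := st7_nle_iff_left.mp hba
  have hg : a * a⁻¹ = b * (b⁻¹ * (a * a⁻¹)) := by
    conv_lhs => rw [ha]
    rw [st7_mul_inv_rev, st7_idem_inv (st7_ran_idem a)]
    calc a * a⁻¹ * b * (b⁻¹ * (a * a⁻¹)) = a * (a⁻¹ * (b * (b⁻¹ * (a * (a⁻¹ * 1))))) := by
          simp [mul_assoc]
      _ = b * (b⁻¹ * (a * (a⁻¹ * (a * (a⁻¹ * 1))))) := by rw [st7_swap_rr a b]
      _ = b * (b⁻¹ * (a * (a⁻¹ * 1))) := by rw [st7_mim2 a (a⁻¹ * 1)]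
      _ = b * (b⁻¹ * (a * a⁻¹)) := by simp
  have hh : b * b⁻¹ = b * (b⁻¹ * (a * a⁻¹)) := by
    conv_lhs => rw [hb]
    rw [st7_mul_inv_rev, st7_idem_inv (st7_ran_idem b)]
    calc b * b⁻¹ * a * (a⁻¹ * (b * b⁻¹)) = b * (b⁻¹ * (a * (a⁻¹ * (b * (b⁻¹ * 1))))) := by
          simp [mul_assoc]
      _ = b * (b⁻¹ * (b * (b⁻¹ * (a * (a⁻¹ * 1))))) := by
          rw [st7_swap_rr a b]
      _ = b * (b⁻¹ * (a * (a⁻¹ * 1))) := by rw [st7_mim2 b (b⁻¹ * (a * (a⁻¹ * 1)))]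
      _ = b * (b⁻¹ * (a * a⁻¹)) := by simp
  have hgeq : a * a⁻¹ = b * b⁻¹ := hg.trans hh.symm
  rw [ha, hgeq, st7_mim]

lemma st7_nle_mul {a b c d : S} (h1 : nle a b) (h2 : nle c d) :
    nle (a * c) (b * d) := by
  obtain ⟨k, hk, rfl⟩ := h1
  obtain ⟨m, hm, rfl⟩ := h2
  refine ⟨k * (b * m * b⁻¹), st7_idem_mul hk (st7_conj_idem hm b), ?_⟩
  symm
  calc k * (b * m * b⁻¹) * (b * d) = k * (b * (m * (b⁻¹ * (b * d)))) := by simp [mul_assoc]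
    _ = k * (b * (b⁻¹ * (b * (m * d)))) := by rw [st7_swap_di hm b d]
    _ = k * (b * (m * d)) := by rw [st7_mim2 b]
    _ = k * b * (m * d) := by rw [mul_assoc]

lemma st7_nle_inv {a b : S} (h : nle a b) : nle a⁻¹ b⁻¹ := by
  have hr := st7_nle_iff_right.mp h
  refine ⟨a⁻¹ * a, st7_dom_idem a, ?_⟩
  conv_lhs => rw [hr]
  rw [st7_mul_inv_rev, st7_idem_inv (st7_dom_idem a)]

lemma st7_nle_dom {a b : S} (h : nle a b) : nle (a⁻¹ * a) (b⁻¹ * b) :=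
  st7_nle_mul (st7_nle_inv h) h

lemma st7_idem_of_nle_idem {a b : S} (h : nle a b) (hb : b * b = b) :
    a * a = a := by
  obtain ⟨k, hk, rfl⟩ := h
  calc k * b * (k * b) = k * (b * (k * b)) := by simp [mul_assoc]
    _ = k * (k * (b * b)) := by rw [st7_swap (st7_idem_comm hb hk) b]
    _ = k * (b * b) := st7_collapse hk _
    _ = k * b := by rw [hb]

lemma st7_idem_dom {a : S} (ha : a * a = a) : a⁻¹ * a = a := by
  rw [st7_idem_inv ha, ha]

lemma st7_nle_idem_mul_left {p : S} (hp : p * p = p) (a : S) : nle (p * a) a :=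
  ⟨p, hp, rfl⟩

lemma st7_nle_mul_idem_right {p : S} (hp : p * p = p) (a : S) : nle (a * p) a := by
  rw [st7_nle_iff_right, st7_mul_inv_rev, st7_idem_inv hp]
  symm
  calc a * (p * a⁻¹ * (a * p)) = a * (p * (a⁻¹ * (a * p))) := by simp [mul_assoc]
    _ = a * (a⁻¹ * (a * (p * p))) := by rw [st7_swap_di hp a p]
    _ = a * (p * p) := st7_mim2 a _
    _ = a * p := by rw [hp]

lemma st7_idem_nle_iff {p q : S} (hp : p * p = p) (hq : q * q = q) :
    nle p q ↔ p * q = p := by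
  constructor
  · rintro ⟨k, hk, rfl⟩
    calc k * q * q = k * (q * q) := by simp [mul_assoc]
      _ = k * q := by rw [hq]
  · intro h; exact ⟨p, hp, h.symm⟩

end St7Order

section St7Compat

variable {S : Type u} [InverseMonoidWithZero S]

lemma st7_compat_idem {p q : S} (hp : p * p = p) (hq : q * q = q) : Compat p q := by
  constructor
  · rw [st7_idem_inv hq]; exact st7_idem_mul hp hq
  · rw [st7_idem_inv hp]; exact st7_idem_mul hp hq

lemma st7_compat_of_common {a b c : S} (h1 : nle a c) (h2 : nle b c) : Compat a b := by
  obtain ⟨k, hk, rfl⟩ := h1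
  obtain ⟨m, hm, rfl⟩ := h2
  constructor
  · have he : k * c * (m * c)⁻¹ = k * ((c * c⁻¹) * m) := by
      rw [st7_mul_inv_rev, st7_idem_inv hm]; simp [mul_assoc]
    rw [he]; exact st7_idem_mul hk (st7_idem_mul (st7_ran_idem c) hm)
  · have he : (k * c)⁻¹ * (m * c) = c⁻¹ * (k * m) * c := by
      rw [st7_mul_inv_rev, st7_idem_inv hk]; simp [mul_assoc]
    rw [he]
    have h3 := st7_conj_idem (st7_idem_mul hk hm) c⁻¹
    rwa [st7_inv_inv] at h3

lemma st7_compat_zero_left (a : S) : Compat (0:S) a := by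
  constructor
  · rw [st7_zm, st7_mz]
  · rw [st7_zero_inv, st7_zm, st7_mz]

lemma st7_compat_zero_right (a : S) : Compat a (0:S) := by
  constructor
  · rw [st7_zero_inv, st7_mz, st7_mz]
  · rw [st7_mz, st7_mz]

end St7Compat

section St7Sup

variable {S : Type u} [DistributiveInverseMonoid S]

lemma st7_le_sup_l {a b : S} (h : Compat a b) : nle a (bsup a b) :=
  DistributiveInverseMonoid.le_sup_left a b h

lemma st7_le_sup_r {a b : S} (h : Compat a b) : nle b (bsup a b) :=
  DistributiveInverseMonoid.le_sup_right a b h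

lemma st7_sup_le {a b c : S} (h : Compat a b) (h1 : nle a c) (h2 : nle b c) :
    nle (bsup a b) c :=
  DistributiveInverseMonoid.sup_le a b c h h1 h2

lemma st7_mul_sup {a b : S} (h : Compat a b) (c : S) :
    c * bsup a b = bsup (c * a) (c * b) :=
  DistributiveInverseMonoid.mul_sup a b c h

lemma st7_sup_mul {a b : S} (h : Compat a b) (c : S) :
    bsup a b * c = bsup (a * c) (b * c) :=
  DistributiveInverseMonoid.sup_mul a b c h

lemma st7_bsup_of_nle_r {a b : S} (h : nle a b) : bsup a b = b := by
  have hc : Compat a b := st7_compat_of_common h (st7_nle_refl b)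
  exact st7_nle_antisymm (st7_sup_le hc h (st7_nle_refl b)) (st7_le_sup_r hc)

lemma st7_bsup_of_nle_l {a b : S} (h : nle b a) : bsup a b = a := by
  have hc : Compat a b := st7_compat_of_common (st7_nle_refl a) h
  exact st7_nle_antisymm (st7_sup_le hc (st7_nle_refl a) h) (st7_le_sup_l hc)

lemma st7_bsup_zero (a : S) : bsup a 0 = a := st7_bsup_of_nle_l (st7_nle_zero a)

lemma st7_zero_bsup (a : S) : bsup 0 a = a := st7_bsup_of_nle_r (st7_nle_zero a)

lemma st7_bsup_idem {p q : S} (hp : p * p = p) (hq : q * q = q) :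
    bsup p q * bsup p q = bsup p q := by
  have hc : Compat p q := st7_compat_idem hp hq
  have h1 : p * bsup p q = p := by
    rw [st7_mul_sup hc p, hp]
    exact st7_bsup_of_nle_l ⟨q, hq, st7_idem_comm hp hq⟩
  have h2 : q * bsup p q = q := by
    rw [st7_mul_sup hc q, hq]
    exact st7_bsup_of_nle_r ⟨p, hp, st7_idem_comm hq hp⟩
  calc bsup p q * bsup p q = bsup (p * bsup p q) (q * bsup p q) := st7_sup_mul hc _
    _ = bsup p q := by rw [h1, h2]

/-- finite joins -/
def st7_joinList (l : List S) : S := l.foldr bsup 0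

lemma st7_joinList_nil : st7_joinList ([] : List S) = 0 := rfl

lemma st7_joinList_cons (x : S) (t : List S) :
    st7_joinList (x :: t) = bsup x (st7_joinList t) := rfl

lemma st7_joinList_lub (l : List S) (c : S) (hb : ∀ x ∈ l, nle x c) :
    (∀ x ∈ l, nle x (st7_joinList l)) ∧
      ∀ d : S, (∀ x ∈ l, nle x d) → nle (st7_joinList l) d := by
  induction l with
  | nil =>
    refine ⟨by simp, fun d _ => ?_⟩
    rw [st7_joinList_nil]; exact st7_nle_zero d
  | cons x t ih =>
    have hb' : ∀ y ∈ t, nle y c := fun y hy => hb y (List.mem_cons_of_mem x hy)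
    obtain ⟨ub, least⟩ := ih hb'
    have hjc : nle (st7_joinList t) c := least c hb'
    have hcomp : Compat x (st7_joinList t) :=
      st7_compat_of_common (hb x (List.mem_cons_self)) hjc
    constructor
    · intro y hy
      rw [st7_joinList_cons]
      rcases List.mem_cons.mp hy with rfl | hy'
      · exact st7_le_sup_l hcomp
      · exact st7_nle_trans (ub y hy') (st7_le_sup_r hcomp)
    · intro d hd
      rw [st7_joinList_cons]
      exact st7_sup_le hcomp (hd x (List.mem_cons_self))
        (least d fun y hy => hd y (List.mem_cons_of_mem x hy))

lemma st7_joinList_mul_left (l : List S) (c : S) (hb : ∀ x ∈ l, nle x c) (s : S) :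
    s * st7_joinList l = st7_joinList (l.map (fun y => s * y)) := by
  induction l with
  | nil => rw [st7_joinList_nil, st7_mz]; rfl
  | cons x t ih =>
    have hb' : ∀ y ∈ t, nle y c := fun y hy => hb y (List.mem_cons_of_mem x hy)
    have hjc : nle (st7_joinList t) c := (st7_joinList_lub t c hb').2 c hb'
    have hcomp : Compat x (st7_joinList t) :=
      st7_compat_of_common (hb x (List.mem_cons_self)) hjc
    rw [st7_joinList_cons, st7_mul_sup hcomp s, ih hb']
    rfl

lemma st7_joinList_mul_right (l : List S) (c : S) (hb : ∀ x ∈ l, nle x c) (s : S) :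
    st7_joinList l * s = st7_joinList (l.map (fun y => y * s)) := by
  induction l with
  | nil => rw [st7_joinList_nil, st7_zm]; rfl
  | cons x t ih =>
    have hb' : ∀ y ∈ t, nle y c := fun y hy => hb y (List.mem_cons_of_mem x hy)
    have hjc : nle (st7_joinList t) c := (st7_joinList_lub t c hb').2 c hb'
    have hcomp : Compat x (st7_joinList t) :=
      st7_compat_of_common (hb x (List.mem_cons_self)) hjc
    rw [st7_joinList_cons, st7_sup_mul hcomp s, ih hb']
    rfl

lemma st7_joinList_idem (l : List S) (h : ∀ x ∈ l, x * x = x) :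
    st7_joinList l * st7_joinList l = st7_joinList l := by
  induction l with
  | nil => rw [st7_joinList_nil, st7_mz]
  | cons x t ih =>
    rw [st7_joinList_cons]
    exact st7_bsup_idem (h x (List.mem_cons_self))
      (ih fun y hy => h y (List.mem_cons_of_mem x hy))

end St7Sup

section St7Bool

variable {S : Type u} [BooleanInverseMonoid S]

lemma st7_compl_idem {p : S} (hp : p * p = p) : bcompl p * bcompl p = bcompl p :=
  BooleanInverseMonoid.compl_idem p hp

lemma st7_mul_compl {p : S} (hp : p * p = p) : p * bcompl p = 0 :=
  BooleanInverseMonoid.mul_compl p hp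

lemma st7_sup_compl {p : S} (hp : p * p = p) : bsup p (bcompl p) = 1 :=
  BooleanInverseMonoid.sup_compl p hp

lemma st7_compat_compl {p : S} (hp : p * p = p) : Compat p (bcompl p) :=
  st7_compat_idem hp (st7_compl_idem hp)

lemma st7_idem_split {p : S} (hp : p * p = p) (y : S) :
    y = bsup (y * p) (y * bcompl p) := by
  conv_lhs => rw [← mul_one y, ← st7_sup_compl hp]
  exact st7_mul_sup (st7_compat_compl hp) y

lemma st7_prime_orth {F : Set S} (hF : IsIdemUltrafilter F)
    {p q : S} (hp : p * p = p) (hq : q * q = q) (_hpq : p * q = 0)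
    (hm : bsup p q ∈ F) : p ∈ F ∨ q ∈ F := by
  obtain ⟨⟨hne, hidF, hmulF, hupF⟩, h0F, hmaxF⟩ := hF
  by_cases hpF : p ∈ F
  · exact Or.inl hpF
  right
  have hFG : F ⊆ {h | h * h = h ∧ ∃ g ∈ F, nle (g * q) h} := by
    intro g hg
    have hgi : g * g = g := hidF g hg
    have hkey : g * q * g = g * q := by
      calc g * q * g = g * (q * g) := mul_assoc _ _ _
        _ = g * (g * q) := by rw [st7_idem_comm hq hgi]
        _ = g * q := st7_collapse hgi q
    exact ⟨hgi, g, hg, ⟨g * q, st7_idem_mul hgi hq, hkey.symm⟩⟩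
  have hGfilter : IsIdemFilter {h | h * h = h ∧ ∃ g ∈ F, nle (g * q) h} := by
    obtain ⟨g0, hg0⟩ := hne
    refine ⟨⟨g0, hFG hg0⟩, fun h hh => hh.1, ?_, ?_⟩
    · rintro h1 ⟨hi1, g1, hg1, hle1⟩ h2 ⟨hi2, g2, hg2, hle2⟩
      refine ⟨st7_idem_mul hi1 hi2, g1 * g2, hmulF g1 hg1 g2 hg2, ?_⟩
      have hsplit : g1 * g2 * q = (g1 * q) * (g2 * q) := by
        calc g1 * g2 * q = g1 * (g2 * q) := mul_assoc _ _ _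
          _ = g1 * (q * (g2 * q)) := by
              rw [st7_swap (st7_idem_comm hq (hidF g2 hg2)) q, hq]
          _ = (g1 * q) * (g2 * q) := (mul_assoc _ _ _).symm
      rw [hsplit]
      exact st7_nle_mul hle1 hle2
    · rintro h ⟨_, g, hg, hgle⟩ f hfidem hle
      exact ⟨hfidem, g, hg, st7_nle_trans hgle hle⟩
  have h0G : (0:S) ∉ {h | h * h = h ∧ ∃ g ∈ F, nle (g * q) h} := by
    rintro ⟨_, g, hg, hle⟩
    have hgq : g * q = 0 := st7_eq_zero_of_nle_zero hle
    have hgm : g * bsup p q ∈ F := hmulF g hg _ hm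
    have heq : g * bsup p q = g * p := by
      rw [st7_mul_sup (st7_compat_idem hp hq) g, hgq, st7_bsup_zero]
    rw [heq] at hgm
    exact hpF (hupF _ hgm p hp ⟨g, hidF g hg, rfl⟩)
  have hFeq := hmaxF _ hGfilter h0G hFG
  obtain ⟨g0, hg0⟩ := hne
  have hqG : q ∈ {h | h * h = h ∧ ∃ g ∈ F, nle (g * q) h} :=
    ⟨hq, g0, hg0, ⟨g0, hidF g0 hg0, rfl⟩⟩
  rw [hFeq]; exact hqG

lemma st7_prime {F : Set S} (hF : IsIdemUltrafilter F)
    {p q : S} (hp : p * p = p) (hq : q * q = q)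
    (hm : bsup p q ∈ F) : p ∈ F ∨ q ∈ F := by
  have hpc : bcompl p * bcompl p = bcompl p := st7_compl_idem hp
  have hq' : (q * bcompl p) * (q * bcompl p) = q * bcompl p :=
    st7_idem_mul hq hpc
  have hpq' : p * (q * bcompl p) = 0 := by
    rw [st7_swap (st7_idem_comm hp hq) (bcompl p), st7_mul_compl hp, st7_mz]
  have hcq' : Compat p (q * bcompl p) := st7_compat_idem hp hq'
  have hcpq : Compat p q := st7_compat_idem hp hq
  have hqle : nle q (bsup p (q * bcompl p)) := by
    have hsplit := st7_idem_split hp q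
    have h2 : nle (bsup (q * p) (q * bcompl p)) (bsup p (q * bcompl p)) := by
      refine st7_sup_le
        (st7_compat_of_common (st7_nle_mul_idem_right hp q)
          (st7_nle_mul_idem_right hpc q)) ?_ (st7_le_sup_r hcq')
      exact st7_nle_trans ⟨q, hq, rfl⟩ (st7_le_sup_l hcq')
    obtain ⟨k, hk, hkeq⟩ := h2
    exact ⟨k, hk, hsplit.trans hkeq⟩
  have heq : bsup p (q * bcompl p) = bsup p q := by
    apply st7_nle_antisymm
    · exact st7_sup_le hcq' (st7_le_sup_l hcpq)
        (st7_nle_trans (st7_nle_mul_idem_right hpc q) (st7_le_sup_r hcpq))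
    · exact st7_sup_le hcpq (st7_le_sup_l hcq') hqle
  have hm' : bsup p (q * bcompl p) ∈ F := by rw [heq]; exact hm
  rcases st7_prime_orth hF hp hq' hpq' hm' with h | h
  · exact Or.inl h
  · exact Or.inr (hF.1.2.2.2 _ h q hq (st7_nle_mul_idem_right hpc q))

lemma st7_prime_list {F : Set S} (hF : IsIdemUltrafilter F)
    (l : List S) (hidem : ∀ x ∈ l, x * x = x)
    (hm : st7_joinList l ∈ F) : ∃ x ∈ l, x ∈ F := by
  induction l with
  | nil =>
    rw [st7_joinList_nil] at hm
    exact absurd hm hF.2.1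
  | cons x t ih =>
    rw [st7_joinList_cons] at hm
    rcases st7_prime hF (hidem x (List.mem_cons_self))
      (st7_joinList_idem t fun y hy => hidem y (List.mem_cons_of_mem x hy)) hm with h | h
    · exact ⟨x, List.mem_cons_self, h⟩
    · obtain ⟨y, hy, hyF⟩ := ih (fun y hy => hidem y (List.mem_cons_of_mem x hy)) h
      exact ⟨y, List.mem_cons_of_mem x hy, hyF⟩

end St7Bool

section St7Transfer

variable {S : Type u} [InverseMonoidWithZero S]

lemma st7_transfer {e2 x u v : S} (he2 : e2 * e2 = e2)
    (h : nle x (u * (e2 * v))) :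
    ∃ t : S, t⁻¹ * t = x⁻¹ * x ∧ nle (t * t⁻¹) e2 := by
  have hd := st7_nle_iff_right.mp h
  have hdi : (x⁻¹ * x) * (x⁻¹ * x) = x⁻¹ * x := st7_dom_idem x
  have ht : (e2 * (v * (x⁻¹ * x)))⁻¹ = x⁻¹ * x * v⁻¹ * e2 := by
    rw [st7_mul_inv_rev, st7_mul_inv_rev, st7_idem_inv he2,
      st7_idem_inv (st7_dom_idem x)]
  have hkey : x⁻¹ * (u * (e2 * (v * (x⁻¹ * x)))) = x⁻¹ * x := by
    calc x⁻¹ * (u * (e2 * (v * (x⁻¹ * x)))) = x⁻¹ * (u * (e2 * v) * (x⁻¹ * x)) := by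
          simp [mul_assoc]
      _ = x⁻¹ * x := by rw [← hd]
  refine ⟨e2 * (v * (x⁻¹ * x)), ?_, ?_⟩
  · have htt : (e2 * (v * (x⁻¹ * x)))⁻¹ * (e2 * (v * (x⁻¹ * x)))
        = (x⁻¹ * x) * (v⁻¹ * e2 * v * (x⁻¹ * x)) := by
      rw [ht]
      calc x⁻¹ * x * v⁻¹ * e2 * (e2 * (v * (x⁻¹ * x)))
          = x⁻¹ * (x * (v⁻¹ * (e2 * (e2 * (v * (x⁻¹ * x)))))) := by simp [mul_assoc]
        _ = x⁻¹ * (x * (v⁻¹ * (e2 * (v * (x⁻¹ * x))))) := by rw [st7_collapse he2]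
        _ = (x⁻¹ * x) * (v⁻¹ * e2 * v * (x⁻¹ * x)) := by simp [mul_assoc]
    have hd2 : (x⁻¹ * x) * ((e2 * (v * (x⁻¹ * x)))⁻¹ * (e2 * (v * (x⁻¹ * x))))
        = x⁻¹ * x := by
      calc (x⁻¹ * x) * ((e2 * (v * (x⁻¹ * x)))⁻¹ * (e2 * (v * (x⁻¹ * x))))
          = (x⁻¹ * (u * (e2 * (v * (x⁻¹ * x)))))
              * ((e2 * (v * (x⁻¹ * x)))⁻¹ * (e2 * (v * (x⁻¹ * x)))) := by rw [hkey]
        _ = x⁻¹ * (u * ((e2 * (v * (x⁻¹ * x)))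
              * ((e2 * (v * (x⁻¹ * x)))⁻¹ * (e2 * (v * (x⁻¹ * x)))))) := by
            simp [mul_assoc]
        _ = x⁻¹ * (u * (e2 * (v * (x⁻¹ * x)))) := by rw [st7_mim1]
        _ = x⁻¹ * x := hkey
    rw [htt] at hd2 ⊢
    rw [← mul_assoc, hdi] at hd2
    exact hd2
  · refine ⟨e2 * (v * (x⁻¹ * x) * v⁻¹),
      st7_idem_mul he2 (st7_conj_idem (st7_dom_idem x) v), ?_⟩
    rw [ht]
    calc e2 * (v * (x⁻¹ * x)) * (x⁻¹ * x * v⁻¹ * e2)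
        = e2 * (v * ((x⁻¹ * x) * ((x⁻¹ * x) * (v⁻¹ * e2)))) := by simp [mul_assoc]
      _ = e2 * (v * ((x⁻¹ * x) * (v⁻¹ * e2))) := by rw [st7_collapse hdi]
      _ = e2 * (v * (x⁻¹ * x) * v⁻¹) * e2 := by simp [mul_assoc]

end St7Transfer

section St7Ideal

variable {S : Type u} [BooleanInverseMonoid S]

/-- the ∨-ideal generated by `e2` -/
def st7_I (e2 : S) : Set S :=
  {z : S | ∃ l : List S,
    (∀ x ∈ l, ∃ u v : S, nle x (u * (e2 * v))) ∧
    (∀ x ∈ l, nle x (st7_joinList l)) ∧ z = st7_joinList l}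

lemma st7_ideal (e2 : S) : IsVIdeal (st7_I e2) := by
  constructor
  · constructor
    · exact ⟨0, [], by simp, by simp, st7_joinList_nil.symm⟩
    · rintro a ⟨l, hgen, hbd, rfl⟩ s
      constructor
      · refine ⟨l.map (fun y => s * y), ?_, ?_, ?_⟩
        · intro x hx
          obtain ⟨y, hy, rfl⟩ := List.mem_map.mp hx
          obtain ⟨u, v, huv⟩ := hgen y hy
          refine ⟨s * u, v, ?_⟩
          rw [mul_assoc]
          exact st7_nle_mul (st7_nle_refl s) huv
        · intro x hx
          obtain ⟨y, hy, rfl⟩ := List.mem_map.mp hx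
          rw [← st7_joinList_mul_left l (st7_joinList l) hbd s]
          exact st7_nle_mul (st7_nle_refl s) (hbd y hy)
        · exact st7_joinList_mul_left l (st7_joinList l) hbd s
      · refine ⟨l.map (fun y => y * s), ?_, ?_, ?_⟩
        · intro x hx
          obtain ⟨y, hy, rfl⟩ := List.mem_map.mp hx
          obtain ⟨u, v, huv⟩ := hgen y hy
          refine ⟨u, v * s, ?_⟩
          have h' := st7_nle_mul huv (st7_nle_refl s)
          have heq : u * (e2 * v) * s = u * (e2 * (v * s)) := by simp [mul_assoc]
          rwa [heq] at h'
        · intro x hx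
          obtain ⟨y, hy, rfl⟩ := List.mem_map.mp hx
          rw [← st7_joinList_mul_right l (st7_joinList l) hbd s]
          exact st7_nle_mul (hbd y hy) (st7_nle_refl s)
        · exact st7_joinList_mul_right l (st7_joinList l) hbd s
  · rintro a ⟨l1, hg1, hb1, rfl⟩ b ⟨l2, hg2, hb2, rfl⟩ hc
    have hdzi : (st7_joinList l1)⁻¹ * st7_joinList l1 * ((st7_joinList l1)⁻¹ * st7_joinList l1)
        = (st7_joinList l1)⁻¹ * st7_joinList l1 := st7_dom_idem (st7_joinList l1)
    have hk : bcompl ((st7_joinList l1)⁻¹ * st7_joinList l1)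
        * bcompl ((st7_joinList l1)⁻¹ * st7_joinList l1)
        = bcompl ((st7_joinList l1)⁻¹ * st7_joinList l1) := st7_compl_idem hdzi
    set kk := bcompl ((st7_joinList l1)⁻¹ * st7_joinList l1) with hkkdef
    set l' := l1 ++ l2.map (fun y => y * kk) with hl'def
    have hzc : nle (st7_joinList l1) (bsup (st7_joinList l1) (st7_joinList l2)) :=
      st7_le_sup_l hc
    have hwc : nle (st7_joinList l2) (bsup (st7_joinList l1) (st7_joinList l2)) :=
      st7_le_sup_r hc
    have hb' : ∀ x ∈ l', nle x (bsup (st7_joinList l1) (st7_joinList l2)) := by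
      intro x hx
      rcases List.mem_append.mp hx with h1 | h2
      · exact st7_nle_trans (hb1 x h1) hzc
      · obtain ⟨y, hy, rfl⟩ := List.mem_map.mp h2
        exact st7_nle_trans
          (st7_nle_trans (st7_nle_mul_idem_right hk y) (hb2 y hy)) hwc
    obtain ⟨hub', hleast'⟩ := st7_joinList_lub l' _ hb'
    have hJc : nle (st7_joinList l') (bsup (st7_joinList l1) (st7_joinList l2)) :=
      hleast' _ hb'
    have hzJ : nle (st7_joinList l1) (st7_joinList l') := by
      refine (st7_joinList_lub l1 _ (fun x h1 => st7_nle_trans (hb1 x h1) hzc)).2 _ ?_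
      intro x h1
      exact hub' x (List.mem_append_left _ h1)
    have hwJ : nle (st7_joinList l2) (st7_joinList l') := by
      refine (st7_joinList_lub l2 _ (fun y hy => st7_nle_trans (hb2 y hy) hwc)).2 _ ?_
      intro y hy
      have hy_split := st7_idem_split hdzi y
      have h1 : nle (y * ((st7_joinList l1)⁻¹ * st7_joinList l1)) (st7_joinList l') := by
        have step : nle (y * ((st7_joinList l1)⁻¹ * st7_joinList l1))
            ((bsup (st7_joinList l1) (st7_joinList l2))
              * ((st7_joinList l1)⁻¹ * st7_joinList l1)) :=
          st7_nle_mul (st7_nle_trans (hb2 y hy) hwc) (st7_nle_refl _)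
        rw [← st7_nle_iff_right.mp hzc] at step
        exact st7_nle_trans step hzJ
      have h2 : nle (y * kk) (st7_joinList l') :=
        hub' _ (List.mem_append_right _ (List.mem_map_of_mem hy))
      have hcomp2 : Compat (y * ((st7_joinList l1)⁻¹ * st7_joinList l1)) (y * kk) :=
        st7_compat_of_common (st7_nle_mul_idem_right hdzi y) (st7_nle_mul_idem_right hk y)
      obtain ⟨w, hw, hweq⟩ := st7_sup_le hcomp2 h1 h2
      exact ⟨w, hw, hy_split.trans hweq⟩
    have hJ : st7_joinList l' = bsup (st7_joinList l1) (st7_joinList l2) :=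
      st7_nle_antisymm hJc (st7_sup_le hc hzJ hwJ)
    refine ⟨l', ?_, ?_, hJ.symm⟩
    · intro x hx
      rcases List.mem_append.mp hx with h1 | h2
      · exact hg1 x h1
      · obtain ⟨y, hy, rfl⟩ := List.mem_map.mp h2
        obtain ⟨u, v, huv⟩ := hg2 y hy
        refine ⟨u, v * kk, ?_⟩
        have h' := st7_nle_mul huv (st7_nle_refl kk)
        have heq : u * (e2 * v) * kk = u * (e2 * (v * kk)) := by simp [mul_assoc]
        rwa [heq] at h'
    · intro x hx
      rw [hJ]
      exact hb' x hx

end St7Ideal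

section St7Main

variable {S : Type u} [BooleanInverseMeetMonoid S]

lemma st7_main (h0 : ZeroSimplifying S) {F : Set S} (hF : IsIdemUltrafilter F)
    {e e1 e2 : S} (he_idem : e * e = e) (he1F : e1 ∈ F)
    (he2i : e2 * e2 = e2) (he20 : e2 ≠ 0) (h12 : e1 * e2 = 0)
    (h1e : nle e1 e) (h2e : nle e2 e) :
    ∃ a : S, Infinitesimal a ∧ a⁻¹ * a ∈ F ∧ ∃ s : S, a = e * s * e := by
  rcases h0 _ (st7_ideal e2) with hI0 | hIuniv
  · exfalso
    have hjl : st7_joinList [e2] = e2 := by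
      rw [st7_joinList_cons, st7_joinList_nil, st7_bsup_zero]
    have hmem : e2 ∈ st7_I e2 := by
      refine ⟨[e2], ?_, ?_, hjl.symm⟩
      · intro x hx
        rw [List.mem_singleton] at hx
        rw [hx]
        exact ⟨1, 1, by rw [one_mul, mul_one]; exact st7_nle_refl e2⟩
      · intro x hx
        rw [List.mem_singleton] at hx
        rw [hx, hjl]
        exact st7_nle_refl e2
    rw [hI0] at hmem
    exact he20 hmem
  · have he1I : e1 ∈ st7_I e2 := by rw [hIuniv]; trivial
    obtain ⟨l, hgen, hbd, he1eq⟩ := he1I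
    have he1i : e1 * e1 = e1 := hF.1.2.1 e1 he1F
    have hble : ∀ x ∈ l, nle x e1 := by
      intro x hx; rw [he1eq]; exact hbd x hx
    have hxi : ∀ x ∈ l, x * x = x := fun x hx =>
      st7_idem_of_nle_idem (hble x hx) he1i
    have hmF : st7_joinList l ∈ F := by rw [← he1eq]; exact he1F
    obtain ⟨x, hxl, hxF⟩ := st7_prime_list hF l hxi hmF
    obtain ⟨u, v, huv⟩ := hgen x hxl
    obtain ⟨t, htd, htr⟩ := st7_transfer he2i huv
    have hxidem : x * x = x := hxi x hxl
    have hxd : x⁻¹ * x = x := st7_idem_dom hxidem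
    have htdx : t⁻¹ * t = x := htd.trans hxd
    have hxe1 : x * e1 = x := (st7_idem_nle_iff hxidem he1i).mp (hble x hxl)
    have hre : (t * t⁻¹) * e2 = t * t⁻¹ := (st7_idem_nle_iff (st7_ran_idem t) he2i).mp htr
    have hxr : x * (t * t⁻¹) = 0 := by
      have h1 : e2 * (t * t⁻¹) = t * t⁻¹ := by
        rw [st7_idem_comm he2i (st7_ran_idem t)]; exact hre
      have hxe2 : x * e2 = 0 := by rw [← hxe1, mul_assoc, h12, st7_mz]
      calc x * (t * t⁻¹) = x * (e2 * (t * t⁻¹)) := by rw [h1]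
        _ = (x * e2) * (t * t⁻¹) := (mul_assoc _ _ _).symm
        _ = 0 := by rw [hxe2, st7_zm]
    have htt0 : t * t = 0 := by
      have e1' : t * (t⁻¹ * t) = t := st7_mim1 t
      have e2' : t * t⁻¹ * t = t := st7_mim t
      calc t * t = (t * (t⁻¹ * t)) * (t * t⁻¹ * t) := by rw [e1', e2']
        _ = t * ((t⁻¹ * t) * (t * t⁻¹)) * t := by simp [mul_assoc]
        _ = t * (x * (t * t⁻¹)) * t := by rw [htdx]
        _ = t * 0 * t := by rw [hxr]
        _ = 0 := by rw [st7_mz, st7_zm]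
    have ht0 : t ≠ 0 := by
      intro h
      rw [h, st7_zero_inv, st7_zm] at htdx
      exact hF.2.1 (by rwa [← htdx] at hxF)
    have hrle : nle (t * t⁻¹) e := st7_nle_trans htr h2e
    have hdle : nle x e := st7_nle_trans (hble x hxl) h1e
    have h4 : e * (t * t⁻¹) = t * t⁻¹ := by
      rw [st7_idem_comm he_idem (st7_ran_idem t)]
      exact (st7_idem_nle_iff (st7_ran_idem t) he_idem).mp hrle
    have h5 : x * e = x := (st7_idem_nle_iff hxidem he_idem).mp hdle
    have h6 : e * t = t := by
      calc e * t = e * (t * t⁻¹ * t) := by rw [st7_mim]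
        _ = (e * (t * t⁻¹)) * t := by simp [mul_assoc]
        _ = (t * t⁻¹) * t := by rw [h4]
        _ = t := st7_mim t
    have htx : t * x = t := by rw [← htdx, st7_mim1]
    have h7 : t * e = t := by
      calc t * e = (t * x) * e := by rw [htx]
        _ = t * (x * e) := mul_assoc _ _ _
        _ = t * x := by rw [h5]
        _ = t := htx
    refine ⟨t, ⟨ht0, htt0⟩, ?_, t, ?_⟩
    · rw [htdx]; exact hxF
    · rw [h6, h7]

end St7Main

/-- In a 0-simplifying Tarski monoid, for every ultrafilter
`F` of the Boolean algebra of idempotents and every `e ∈ F` there is an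
infinitesimal `a` with `a⁻¹a ∈ F` and `a ∈ eSe`. -/
theorem statement7 (S : Type u) [BooleanInverseMeetMonoid S] [Countable S]
    (hat : IdemAtomless S) (h0 : ZeroSimplifying S)
    (F : Set S) (hF : IsIdemUltrafilter F) (e : S) (he : e ∈ F) :
    ∃ a : S, Infinitesimal a ∧ a⁻¹ * a ∈ F ∧ ∃ s : S, a = e * s * e := by
  have he_idem : e * e = e := hF.1.2.1 e he
  have he0 : e ≠ 0 := fun h => hF.2.1 (h ▸ he)
  obtain ⟨f, hfi, hf0, hfe, hfne⟩ := hat e he_idem he0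
  have hfe' : f * e = f := (st7_idem_nle_iff hfi he_idem).mp hfe
  have hcf : bcompl f * bcompl f = bcompl f := st7_compl_idem hfi
  have hf'i : (e * bcompl f) * (e * bcompl f) = e * bcompl f :=
    st7_idem_mul he_idem hcf
  have hsplit : e = bsup f (e * bcompl f) := by
    have h1 := st7_idem_split hfi e
    rwa [st7_idem_comm he_idem hfi, hfe'] at h1
  have hff' : f * (e * bcompl f) = 0 := by
    rw [← mul_assoc, hfe', st7_mul_compl hfi]
  have hf'0 : e * bcompl f ≠ 0 := by
    intro h
    rw [h, st7_bsup_zero] at hsplit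
    exact hfne hsplit.symm
  have hf'le : nle (e * bcompl f) e := st7_nle_mul_idem_right hcf e
  have hm : bsup f (e * bcompl f) ∈ F := by rw [← hsplit]; exact he
  rcases st7_prime hF hfi hf'i hm with h1 | h1
  · exact st7_main h0 hF he_idem h1 hf'i hf'0 hff' hfe hf'le
  · refine st7_main h0 hF he_idem h1 hfi hf0 ?_ hf'le hfe
    rw [st7_idem_comm hf'i hfi, hff']
end

section
/- Let S be a 0-simplifying Tarski monoid. Then every ultrafilter of S contains an infinitesimal or a product ab of two infinitesimals a and b. -/
universe u

namespace St9

section Sec1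


variable {S : Type u} [InverseMonoidWithZero S]

lemma zmul (a : S) : 0 * a = 0 := InverseMonoidWithZero.zero_mul' a
lemma mulz (a : S) : a * 0 = 0 := InverseMonoidWithZero.mul_zero' a
lemma aia (a : S) : a * a⁻¹ * a = a := InverseMonoidWithZero.mul_inv_mul a
lemma iai (a : S) : a⁻¹ * a * a⁻¹ = a⁻¹ := InverseMonoidWithZero.inv_mul_inv a
lemma iuniq (a b : S) (h1 : a * b * a = a) (h2 : b * a * b = b) : b = a⁻¹ :=
  InverseMonoidWithZero.inv_unique a b h1 h2

lemma pull {a b c : S} (h : a * b = c) (x : S) : a * (b * x) = c * x := by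
  rw [← mul_assoc, h]

lemma swap {a b : S} (h : a * b = b * a) (x : S) : a * (b * x) = b * (a * x) := by
  rw [← mul_assoc, h, mul_assoc]

lemma aia' (a : S) : a * (a⁻¹ * a) = a := by rw [← mul_assoc, aia]
lemma iai' (a : S) : a⁻¹ * (a * a⁻¹) = a⁻¹ := by rw [← mul_assoc, iai]

lemma invol (a : S) : a⁻¹⁻¹ = a := (iuniq a⁻¹ a (iai a) (aia a)).symm

lemma inv_idem {e : S} (he : e * e = e) : e⁻¹ = e :=
  (iuniq e e (by rw [he, he]) (by rw [he, he])).symm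

lemma idem_dd (a : S) : (a⁻¹ * a) * (a⁻¹ * a) = a⁻¹ * a := by
  simp only [mul_assoc]; rw [aia']

lemma idem_rr (a : S) : (a * a⁻¹) * (a * a⁻¹) = a * a⁻¹ := by
  simp only [mul_assoc]; rw [iai']

lemma idem_mul {e f : S} (he : e * e = e) (hf : f * f = f) : (e * f) * (e * f) = e * f := by
  have h1 : (e * f) * (f * ((e * f)⁻¹ * e)) * (e * f) = e * f := by
    have key := aia' (e * f)
    simp only [mul_assoc] at key ⊢
    rw [pull hf, pull he, key]
  have h2 : (f * ((e * f)⁻¹ * e)) * (e * f) * (f * ((e * f)⁻¹ * e)) = f * ((e * f)⁻¹ * e) := by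
    have key := congrArg (· * e) (iai (e * f))
    simp only [mul_assoc] at key ⊢
    rw [pull he, pull hf, key]
  have h3 : f * ((e * f)⁻¹ * e) = (e * f)⁻¹ := iuniq _ _ (by
      simpa only [mul_assoc] using h1) (by simpa only [mul_assoc] using h2)
  have h4 : (e * f)⁻¹ * (e * f)⁻¹ = (e * f)⁻¹ := by
    calc (e * f)⁻¹ * (e * f)⁻¹ = (f * ((e * f)⁻¹ * e)) * (f * ((e * f)⁻¹ * e)) := by rw [h3]
      _ = f * ((e * f)⁻¹ * (e * (f * ((e * f)⁻¹ * e)))) := by simp only [mul_assoc]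
      _ = f * ((e * f)⁻¹ * e) := by
          have key := congrArg (· * e) (iai (e * f))
          simp only [mul_assoc] at key
          rw [key]
      _ = (e * f)⁻¹ := h3
  have h5 : e * f = (e * f)⁻¹ := by
    conv_lhs => rw [← invol (e * f)]
    rw [inv_idem h4]
  rw [h5]; exact h4

lemma idem_comm {e f : S} (he : e * e = e) (hf : f * f = f) : e * f = f * e := by
  have hm := idem_mul he hf
  have hm' := idem_mul hf he
  have h1 : (e * f) * (f * e) * (e * f) = e * f := by
    simp only [mul_assoc] at hm ⊢
    rw [pull hf, pull he, hm]
  have h2 : (f * e) * (e * f) * (f * e) = f * e := by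
    simp only [mul_assoc] at hm' ⊢
    rw [pull he, pull hf, hm']
  have h3 : f * e = (e * f)⁻¹ := iuniq _ _ h1 h2
  rw [h3]; exact (inv_idem hm).symm

lemma mul_inv_rev' (a b : S) : (a * b)⁻¹ = b⁻¹ * a⁻¹ := by
  have hc := idem_comm (idem_rr b) (idem_dd a)
  symm; apply iuniq
  · calc a * b * (b⁻¹ * a⁻¹) * (a * b) = a * ((b * b⁻¹) * (a⁻¹ * a)) * b := by simp only [mul_assoc]
      _ = a * ((a⁻¹ * a) * (b * b⁻¹)) * b := by rw [hc]
      _ = (a * a⁻¹ * a) * (b * b⁻¹ * b) := by simp only [mul_assoc]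
      _ = a * b := by rw [aia, aia]
  · calc b⁻¹ * a⁻¹ * (a * b) * (b⁻¹ * a⁻¹) = b⁻¹ * ((a⁻¹ * a) * (b * b⁻¹)) * a⁻¹ := by simp only [mul_assoc]
      _ = b⁻¹ * ((b * b⁻¹) * (a⁻¹ * a)) * a⁻¹ := by rw [hc]
      _ = (b⁻¹ * b * b⁻¹) * (a⁻¹ * a * a⁻¹) := by simp only [mul_assoc]
      _ = b⁻¹ * a⁻¹ := by rw [iai, iai]

lemma conj_idem (a : S) {e : S} (he : e * e = e) :
    (a * e * a⁻¹) * (a * e * a⁻¹) = a * e * a⁻¹ := by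
  have hcm := idem_comm (idem_dd a) he
  calc (a * e * a⁻¹) * (a * e * a⁻¹) = a * (e * ((a⁻¹ * a) * (e * a⁻¹))) := by simp only [mul_assoc]
    _ = a * (e * (e * ((a⁻¹ * a) * a⁻¹))) := by rw [swap hcm]
    _ = a * (e * a⁻¹) := by rw [pull he, iai]
    _ = a * e * a⁻¹ := by simp only [mul_assoc]

lemma zero_inv : (0 : S)⁻¹ = 0 :=
  (iuniq (0:S) 0 (by rw [zmul, zmul]) (by rw [zmul, zmul])).symm

lemma conj_idem' (a : S) {e : S} (he : e * e = e) :
    (a⁻¹ * e * a) * (a⁻¹ * e * a) = a⁻¹ * e * a := by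
  have := conj_idem a⁻¹ he
  rwa [invol] at this


end Sec1

section Sec2


variable {S : Type u} [InverseMonoidWithZero S]

lemma nle_refl (a : S) : nle a a := ⟨a * a⁻¹, idem_rr a, (aia a).symm⟩

lemma nle_left {a b : S} (h : nle a b) : a = (a * a⁻¹) * b := by
  obtain ⟨e, he, hab⟩ := h
  have key : (a * a⁻¹) * b = a := by
    rw [hab, mul_inv_rev', inv_idem he]
    calc (e * b) * (b⁻¹ * e) * b = e * ((b * b⁻¹) * (e * b)) := by simp only [mul_assoc]
      _ = e * (e * ((b * b⁻¹) * b)) := by rw [swap (idem_comm (idem_rr b) he)]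
      _ = e * ((b * b⁻¹) * b) := by rw [pull he]
      _ = e * b := by rw [aia b]
  exact key.symm

lemma nle_of_left {a b : S} (h : a = (a * a⁻¹) * b) : nle a b := ⟨a * a⁻¹, idem_rr a, h⟩

lemma nle_right {a b : S} (h : nle a b) : a = b * (a⁻¹ * a) := by
  obtain ⟨e, he, hab⟩ := h
  have hinv : a⁻¹ = b⁻¹ * e := by rw [hab, mul_inv_rev', inv_idem he]
  have key : b * (a⁻¹ * a) = a := by
    calc b * (a⁻¹ * a) = b * (b⁻¹ * (e * (e * b))) := by
          rw [hinv, hab]; simp only [mul_assoc]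
      _ = b * (b⁻¹ * (e * b)) := by rw [pull he]
      _ = (b * b⁻¹) * (e * b) := by simp only [mul_assoc]
      _ = e * ((b * b⁻¹) * b) := by rw [swap (idem_comm (idem_rr b) he)]
      _ = e * b := by rw [aia b]
      _ = a := hab.symm
  exact key.symm

lemma nle_right' {a b : S} (h : ∃ f : S, f * f = f ∧ a = b * f) : nle a b := by
  obtain ⟨f, hf, hab⟩ := h
  refine ⟨b * f * b⁻¹, conj_idem b hf, ?_⟩
  calc a = b * f := hab
    _ = (b * (b⁻¹ * b)) * f := by rw [aia']
    _ = b * (f * (b⁻¹ * b)) := by rw [mul_assoc, idem_comm (idem_dd b) hf]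
    _ = (b * f * b⁻¹) * b := by simp only [mul_assoc]

lemma nle_right_ex {a b : S} (h : nle a b) : ∃ f : S, f * f = f ∧ a = b * f :=
  ⟨a⁻¹ * a, idem_dd a, nle_right h⟩

lemma nle_trans {a b c : S} (h1 : nle a b) (h2 : nle b c) : nle a c := by
  obtain ⟨e, he, hab⟩ := h1
  obtain ⟨f, hf, hbc⟩ := h2
  exact ⟨e * f, idem_mul he hf, by rw [hab, hbc, mul_assoc]⟩

lemma nle_zero {a : S} (h : nle a 0) : a = 0 := by
  obtain ⟨e, _, hab⟩ := h; rw [hab, mulz]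

lemma zero_nle (a : S) : nle 0 a := ⟨0, mulz 0, (zmul a).symm⟩

lemma nle_antisymm {a b : S} (h1 : nle a b) (h2 : nle b a) : a = b := by
  set E := a * a⁻¹ with hE
  set F := b * b⁻¹ with hF
  have hab : a = E * b := nle_left h1
  have hba : b = F * a := nle_left h2
  have hainv : a⁻¹ = b⁻¹ * E := by rw [hab, mul_inv_rev', inv_idem (idem_rr a)]
  have hbinv : b⁻¹ = a⁻¹ * F := by rw [hba, mul_inv_rev', inv_idem (idem_rr b)]
  have hEF : E = E * F := by
    calc E = a * a⁻¹ := hE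
      _ = (E * b) * (b⁻¹ * E) := by rw [← hab, ← hainv]
      _ = E * (F * E) := by rw [hF]; simp only [mul_assoc]
      _ = E * (E * F) := by rw [idem_comm (idem_rr b) (idem_rr a)]
      _ = E * F := by rw [pull (idem_rr a)]
  have hFE : F = F * E := by
    calc F = b * b⁻¹ := hF
      _ = (F * a) * (a⁻¹ * F) := by rw [← hba, ← hbinv]
      _ = F * (E * F) := by rw [hE]; simp only [mul_assoc]
      _ = F * (F * E) := by rw [idem_comm (idem_rr a) (idem_rr b)]
      _ = F * E := by rw [pull (idem_rr b)]
  have hEeqF : E = F := by rw [hEF, idem_comm (idem_rr a) (idem_rr b), ← hFE]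
  calc a = E * b := hab
    _ = E * (F * a) := by rw [← hba]
    _ = F * (F * a) := by rw [hEeqF]
    _ = F * a := by rw [pull (idem_rr b)]
    _ = b := hba.symm

lemma nle_mul_left {a b : S} (c : S) (h : nle a b) : nle (c * a) (c * b) := by
  obtain ⟨f, hf, hab⟩ := nle_right_ex h
  exact nle_right' ⟨f, hf, by rw [hab, mul_assoc]⟩

lemma nle_mul_right {a b : S} (c : S) (h : nle a b) : nle (a * c) (b * c) := by
  obtain ⟨e, he, hab⟩ := h
  exact ⟨e, he, by rw [hab, mul_assoc]⟩

lemma nle_inv {a b : S} (h : nle a b) : nle a⁻¹ b⁻¹ := by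
  obtain ⟨e, he, hab⟩ := h
  exact nle_right' ⟨e, he, by rw [hab, mul_inv_rev', inv_idem he]⟩

lemma nle_d {a b : S} (h : nle a b) : nle (a⁻¹ * a) (b⁻¹ * b) := by
  obtain ⟨f, hf, hab⟩ := nle_right_ex h
  have hinv : a⁻¹ = f * b⁻¹ := by rw [hab, mul_inv_rev', inv_idem hf]
  refine ⟨f, hf, ?_⟩
  calc a⁻¹ * a = f * (b⁻¹ * (b * f)) := by rw [hinv, hab]; simp only [mul_assoc]
    _ = f * (f * (b⁻¹ * b)) := by rw [← mul_assoc b⁻¹ b f, idem_comm (idem_dd b) hf]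
    _ = f * (b⁻¹ * b) := by rw [pull hf]

lemma nle_r {a b : S} (h : nle a b) : nle (a * a⁻¹) (b * b⁻¹) := by
  have := nle_d (nle_inv h)
  rwa [invol, invol] at this

lemma idem_nle_iff {e f : S} (he : e * e = e) (hf : f * f = f) : nle e f ↔ e * f = e := by
  constructor
  · intro h
    have h1 := nle_right h
    rw [inv_idem he, he] at h1
    rw [idem_comm he hf, ← h1]
  · intro h
    exact ⟨e, he, h.symm⟩

lemma nle_idem {s e : S} (he : e * e = e) (h : nle s e) : s * s = s := by
  obtain ⟨f, hf, hse⟩ := h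
  rw [hse]; exact idem_mul hf he

lemma nle_one_iff {s : S} : nle s 1 ↔ s * s = s := by
  constructor
  · intro h; exact nle_idem (by rw [one_mul]) h
  · intro hs; exact ⟨s, hs, (mul_one s).symm⟩

lemma idem_nle_one {e : S} (he : e * e = e) : nle e 1 := nle_one_iff.mpr he

lemma mul_idem_nle_left {e f : S} (he : e * e = e) (hf : f * f = f) : nle (e * f) e :=
  ⟨f, hf, idem_comm he hf⟩

lemma mul_idem_nle_right {e f : S} (he : e * e = e) (hf : f * f = f) : nle (e * f) f :=
  ⟨e, he, rfl⟩

lemma d_nle_iff {a e : S} (he : e * e = e) : nle (a⁻¹ * a) e ↔ a * e = a := by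
  constructor
  · intro h
    have h1 : (a⁻¹ * a) * e = a⁻¹ * a := (idem_nle_iff (idem_dd a) he).mp h
    calc a * e = (a * (a⁻¹ * a)) * e := by rw [aia']
      _ = a * ((a⁻¹ * a) * e) := by rw [mul_assoc]
      _ = a * (a⁻¹ * a) := by rw [h1]
      _ = a := aia' a
  · intro h
    apply (idem_nle_iff (idem_dd a) he).mpr
    rw [mul_assoc, h]

lemma r_nle_iff {a e : S} (he : e * e = e) : nle (a * a⁻¹) e ↔ e * a = a := by
  have base := @d_nle_iff S _ a⁻¹ e he
  rw [invol] at base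
  rw [base]
  constructor
  · intro h
    have h2 := congrArg (fun z : S => z⁻¹) h
    rwa [mul_inv_rev', inv_idem he, invol] at h2
  · intro h
    have h2 := congrArg (fun z : S => z⁻¹) h
    rwa [mul_inv_rev', inv_idem he] at h2


end Sec2

section Sec3


section CompatLemmas
variable {S : Type u} [InverseMonoidWithZero S]

lemma compat_self (a : S) : Compat a a := ⟨idem_rr a, idem_dd a⟩

lemma compat_symm {a b : S} (h : Compat a b) : Compat b a := by
  obtain ⟨h1, h2⟩ := h
  have e1 : b * a⁻¹ = a * b⁻¹ := by
    have := inv_idem h1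
    rw [mul_inv_rev', invol] at this
    exact this
  have e2 : b⁻¹ * a = a⁻¹ * b := by
    have := inv_idem h2
    rw [mul_inv_rev', invol] at this
    exact this
  exact ⟨by rw [e1]; exact h1, by rw [e2]; exact h2⟩

lemma compat_idem {e f : S} (he : e * e = e) (hf : f * f = f) : Compat e f := by
  constructor
  · rw [inv_idem hf]; exact idem_mul he hf
  · rw [inv_idem he]; exact idem_mul he hf

lemma compat_zero_left (a : S) : Compat 0 a := by
  constructor
  · rw [zmul, mulz]
  · rw [zero_inv, zmul, mulz]

lemma compat_zero_right (a : S) : Compat a 0 := compat_symm (compat_zero_left a)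

lemma compat_inv {a b : S} (h : Compat a b) : Compat a⁻¹ b⁻¹ := by
  obtain ⟨h1, h2⟩ := h
  exact ⟨by rw [invol]; exact h2, by rw [invol]; exact h1⟩

lemma compat_mul_left {a b : S} (c : S) (h : Compat a b) : Compat (c * a) (c * b) := by
  obtain ⟨h1, h2⟩ := h
  constructor
  · have hx : (c * a) * (c * b)⁻¹ = c * (a * b⁻¹) * c⁻¹ := by
      rw [mul_inv_rev']; simp only [mul_assoc]
    rw [hx]; exact conj_idem c h1
  · have hx : (a⁻¹ * (c⁻¹ * c) * a) * (a⁻¹ * b) = (c * a)⁻¹ * (c * b) := by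
      rw [mul_inv_rev']
      calc (a⁻¹ * (c⁻¹ * c) * a) * (a⁻¹ * b)
          = a⁻¹ * ((c⁻¹ * c) * ((a * a⁻¹) * b)) := by simp only [mul_assoc]
        _ = a⁻¹ * ((a * a⁻¹) * ((c⁻¹ * c) * b)) := by
            rw [swap (idem_comm (idem_dd c) (idem_rr a))]
        _ = (a⁻¹ * (a * a⁻¹)) * ((c⁻¹ * c) * b) := by simp only [mul_assoc]
        _ = a⁻¹ * c⁻¹ * (c * b) := by rw [iai']; simp only [mul_assoc]
    rw [← hx]; exact idem_mul (conj_idem' a (idem_dd c)) h2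

lemma compat_mul_right {a b : S} (c : S) (h : Compat a b) : Compat (a * c) (b * c) := by
  obtain ⟨h1, h2⟩ := h
  constructor
  · have hx : (a * (c * c⁻¹) * a⁻¹) * (a * b⁻¹) = (a * c) * (b * c)⁻¹ := by
      rw [mul_inv_rev']
      calc (a * (c * c⁻¹) * a⁻¹) * (a * b⁻¹)
          = a * ((c * c⁻¹) * ((a⁻¹ * a) * b⁻¹)) := by simp only [mul_assoc]
        _ = a * ((a⁻¹ * a) * ((c * c⁻¹) * b⁻¹)) := by
            rw [swap (idem_comm (idem_rr c) (idem_dd a))]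
        _ = (a * (a⁻¹ * a)) * ((c * c⁻¹) * b⁻¹) := by simp only [mul_assoc]
        _ = a * c * (c⁻¹ * b⁻¹) := by rw [aia']; simp only [mul_assoc]
    rw [← hx]; exact idem_mul (conj_idem a (idem_rr c)) h1
  · have hx : (a * c)⁻¹ * (b * c) = c⁻¹ * (a⁻¹ * b) * c := by
      rw [mul_inv_rev']; simp only [mul_assoc]
    rw [hx]; exact conj_idem' c h2

lemma compat_nle {a b a' b' : S} (ha : nle a' a) (hb : nle b' b) (h : Compat a b) :
    Compat a' b' := by
  obtain ⟨h1, h2⟩ := h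
  obtain ⟨f, hf, haf⟩ := nle_right_ex ha
  obtain ⟨g, hg, hbg⟩ := hb
  have hbinv : b'⁻¹ = b⁻¹ * g := by rw [hbg, mul_inv_rev', inv_idem hg]
  have hainv : a'⁻¹ = f * a⁻¹ := by rw [haf, mul_inv_rev', inv_idem hf]
  constructor
  · have hx : ((a * b⁻¹) * (b * f * b⁻¹)) * g = a' * b'⁻¹ := by
      rw [haf, hbinv]
      calc ((a * b⁻¹) * (b * f * b⁻¹)) * g
          = a * (((b⁻¹ * b) * f) * (b⁻¹ * g)) := by simp only [mul_assoc]
        _ = a * ((f * (b⁻¹ * b)) * (b⁻¹ * g)) := by rw [idem_comm (idem_dd b) hf]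
        _ = a * (f * (b⁻¹ * ((b * b⁻¹) * g))) := by simp only [mul_assoc]
        _ = a * (f * (b⁻¹ * g)) := by rw [pull (iai' b)]
        _ = a * f * (b⁻¹ * g) := by simp only [mul_assoc]
    rw [← hx]
    exact idem_mul (idem_mul h1 (conj_idem b hf)) hg
  · have hx : (f * (a⁻¹ * g * a)) * (a⁻¹ * b) = a'⁻¹ * b' := by
      rw [hainv, hbg]
      calc (f * (a⁻¹ * g * a)) * (a⁻¹ * b)
          = f * (a⁻¹ * (g * ((a * a⁻¹) * b))) := by simp only [mul_assoc]
        _ = f * (a⁻¹ * ((a * a⁻¹) * (g * b))) := by rw [swap (idem_comm hg (idem_rr a))]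
        _ = f * ((a⁻¹ * (a * a⁻¹)) * (g * b)) := by simp only [mul_assoc]
        _ = f * a⁻¹ * (g * b) := by rw [iai']; simp only [mul_assoc]
    rw [← hx]
    exact idem_mul (idem_mul hf (conj_idem' a hg)) h2

end CompatLemmas

section SupLemmas
variable {S : Type u} [DistributiveInverseMonoid S]

lemma le_bsup_l {a b : S} (h : Compat a b) : nle a (bsup a b) :=
  DistributiveInverseMonoid.le_sup_left a b h

lemma le_bsup_r {a b : S} (h : Compat a b) : nle b (bsup a b) :=
  DistributiveInverseMonoid.le_sup_right a b h

lemma bsup_le {a b c : S} (h : Compat a b) (h1 : nle a c) (h2 : nle b c) : nle (bsup a b) c :=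
  DistributiveInverseMonoid.sup_le a b c h h1 h2

lemma mul_bsup {a b : S} (c : S) (h : Compat a b) : c * bsup a b = bsup (c * a) (c * b) :=
  DistributiveInverseMonoid.mul_sup a b c h

lemma bsup_mul {a b : S} (c : S) (h : Compat a b) : bsup a b * c = bsup (a * c) (b * c) :=
  DistributiveInverseMonoid.sup_mul a b c h

lemma bsup_zero (a : S) : bsup a 0 = a :=
  nle_antisymm (bsup_le (compat_zero_right a) (nle_refl a) (zero_nle a))
    (le_bsup_l (compat_zero_right a))

lemma zero_bsup (a : S) : bsup 0 a = a :=
  nle_antisymm (bsup_le (compat_zero_left a) (zero_nle a) (nle_refl a))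
    (le_bsup_r (compat_zero_left a))

lemma bsup_eq_right {a b : S} (h : nle a b) : bsup a b = b := by
  have hc : Compat a b := compat_nle h (nle_refl b) (compat_self b)
  exact nle_antisymm (bsup_le hc h (nle_refl b)) (le_bsup_r hc)

lemma bsup_idem {e f : S} (he : e * e = e) (hf : f * f = f) :
    (bsup e f) * (bsup e f) = bsup e f := by
  apply nle_one_iff.mp
  exact bsup_le (compat_idem he hf) (idem_nle_one he) (idem_nle_one hf)

lemma inv_bsup {a b : S} (h : Compat a b) : (bsup a b)⁻¹ = bsup a⁻¹ b⁻¹ := by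
  have hci := compat_inv h
  apply nle_antisymm
  · have h1 : nle (bsup a b) (bsup a⁻¹ b⁻¹)⁻¹ := by
      apply bsup_le h
      · have := nle_inv (le_bsup_l hci); rwa [invol] at this
      · have := nle_inv (le_bsup_r hci); rwa [invol] at this
    have := nle_inv h1; rwa [invol] at this
  · exact bsup_le hci (nle_inv (le_bsup_l h)) (nle_inv (le_bsup_r h))

lemma compat_bsup {y a b : S} (hya : Compat y a) (hyb : Compat y b) (hab : Compat a b) :
    Compat y (bsup a b) := by
  constructor
  · rw [inv_bsup hab, mul_bsup y (compat_inv hab)]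
    exact bsup_idem hya.1 hyb.1
  · rw [mul_bsup y⁻¹ hab]
    exact bsup_idem hya.2 hyb.2

lemma bsup_assoc {a b c : S} (hab : Compat a b) (hac : Compat a c) (hbc : Compat b c) :
    bsup a (bsup b c) = bsup (bsup a b) c := by
  have h1 : Compat a (bsup b c) := compat_bsup hab hac hbc
  have h2 : Compat (bsup a b) c := compat_symm (compat_bsup (compat_symm hac) (compat_symm hbc) hab)
  apply nle_antisymm
  · apply bsup_le h1
    · exact nle_trans (le_bsup_l hab) (le_bsup_l h2)
    · apply bsup_le hbc
      · exact nle_trans (le_bsup_r hab) (le_bsup_l h2)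
      · exact le_bsup_r h2
  · apply bsup_le h2
    · apply bsup_le hab
      · exact le_bsup_l h1
      · exact nle_trans (le_bsup_l hbc) (le_bsup_r h1)
    · exact nle_trans (le_bsup_r hbc) (le_bsup_r h1)

lemma nle_bsup_mono {a b a' b' : S} (ha : nle a a') (hb : nle b b') (h : Compat a' b') :
    nle (bsup a b) (bsup a' b') := by
  have hc : Compat a b := compat_nle ha hb h
  exact bsup_le hc (nle_trans ha (le_bsup_l h)) (nle_trans hb (le_bsup_r h))

end SupLemmas

end Sec3

section Sec4


section MeetLemmas
variable {S : Type u} [BooleanInverseMeetMonoid S]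

lemma binf_le_l (a b : S) : nle (binf a b) a := BooleanInverseMeetMonoid.inf_le_left a b
lemma binf_le_r (a b : S) : nle (binf a b) b := BooleanInverseMeetMonoid.inf_le_right a b
lemma le_binf {a b c : S} (h1 : nle c a) (h2 : nle c b) : nle c (binf a b) :=
  BooleanInverseMeetMonoid.le_inf a b c h1 h2

lemma binf_bsup_le {a b : S} (m : S) (hab : Compat a b) :
    nle (binf (bsup a b) m) (bsup (binf a m) (binf b m)) := by
  set t := binf (bsup a b) m with ht
  have ht1 : nle t (bsup a b) := binf_le_l _ _
  have ht2 : nle t m := binf_le_r _ _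
  have htr : t = (bsup a b) * (t⁻¹ * t) := nle_right ht1
  have hd : (bsup a b) * (t⁻¹ * t) = bsup (a * (t⁻¹ * t)) (b * (t⁻¹ * t)) := bsup_mul _ hab
  have ha1 : nle (a * (t⁻¹ * t)) a := nle_right' ⟨t⁻¹ * t, idem_dd t, rfl⟩
  have hb1 : nle (b * (t⁻¹ * t)) b := nle_right' ⟨t⁻¹ * t, idem_dd t, rfl⟩
  have ha2 : nle (a * (t⁻¹ * t)) t := by
    have := nle_mul_right (t⁻¹ * t) (le_bsup_l hab)
    rwa [← htr] at this
  have hb2 : nle (b * (t⁻¹ * t)) t := by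
    have := nle_mul_right (t⁻¹ * t) (le_bsup_r hab)
    rwa [← htr] at this
  have ha3 : nle (a * (t⁻¹ * t)) (binf a m) := le_binf ha1 (nle_trans ha2 ht2)
  have hb3 : nle (b * (t⁻¹ * t)) (binf b m) := le_binf hb1 (nle_trans hb2 ht2)
  have hcim : Compat (binf a m) (binf b m) :=
    compat_nle (binf_le_r a m) (binf_le_r b m) (compat_self m)
  have heq : t = bsup (a * (t⁻¹ * t)) (b * (t⁻¹ * t)) := by rw [← hd, ← htr]
  have hfin := nle_bsup_mono ha3 hb3 hcim
  rwa [← heq] at hfin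

end MeetLemmas

section ComplLemmas
variable {S : Type u} [BooleanInverseMonoid S]

lemma bcompl_idem {e : S} (he : e * e = e) : bcompl e * bcompl e = bcompl e :=
  BooleanInverseMonoid.compl_idem e he

lemma mul_bcompl {e : S} (he : e * e = e) : e * bcompl e = 0 :=
  BooleanInverseMonoid.mul_compl e he

lemma bcompl_mul {e : S} (he : e * e = e) : bcompl e * e = 0 := by
  rw [← idem_comm he (bcompl_idem he)]; exact mul_bcompl he

lemma bsup_bcompl {e : S} (he : e * e = e) : bsup e (bcompl e) = 1 :=
  BooleanInverseMonoid.sup_compl e he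

/-- every element decomposes along an idempotent and its complement -/
lemma mul_decomp (a : S) {e : S} (he : e * e = e) :
    a = bsup (a * e) (a * bcompl e) := by
  have h : a * bsup e (bcompl e) = bsup (a * e) (a * bcompl e) :=
    mul_bsup a (compat_idem he (bcompl_idem he))
  rw [bsup_bcompl he, mul_one] at h
  exact h

lemma idem_nle_bcompl {m e : S} (hm : m * m = m) (he : e * e = e) (h : m * e = 0) :
    nle m (bcompl e) := by
  have h2 : m = bsup (m * e) (m * bcompl e) := mul_decomp m he
  rw [h, zero_bsup] at h2
  exact ⟨m, hm, h2⟩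

/-- if `m ≤ e`, `n ≤ f` (all idempotent) and `e * f = 0` then `m * n = 0`. -/
lemma mul_eq_zero_mono {m n e f : S} (hm : m * m = m) (hn : n * n = n)
    (he : e * e = e) (hf : f * f = f)
    (h1 : nle m e) (h2 : nle n f) (h : e * f = 0) : m * n = 0 := by
  have hme : m * e = m := (idem_nle_iff hm he).mp h1
  have hnf : n * f = n := (idem_nle_iff hn hf).mp h2
  have hnf' : f * n = n := by rw [idem_comm hf hn]; exact hnf
  calc m * n = (m * e) * (f * n) := by rw [hme, hnf']
    _ = m * ((e * f) * n) := by simp only [mul_assoc]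
    _ = 0 := by rw [h, zmul, mulz]

end ComplLemmas

end Sec4

section Sec5


variable {S : Type u} [BooleanInverseMeetMonoid S]

section Ultra
variable {A : Set S} (hA : IsMUltrafilter A)

include hA

lemma A_nonempty : A.Nonempty := hA.1.1
lemma A_meet {a b : S} (ha : a ∈ A) (hb : b ∈ A) : binf a b ∈ A := hA.1.2.1 a ha b hb
lemma A_up {a b : S} (ha : a ∈ A) (h : nle a b) : b ∈ A := hA.1.2.2 a ha b h
lemma A_nzero : (0 : S) ∉ A := hA.2.1

lemma A_mem_ne_zero {a : S} (ha : a ∈ A) : a ≠ 0 := fun h => A_nzero hA (h ▸ ha)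

lemma ultra_char {s : S} : s ∈ A ↔ ∀ c ∈ A, binf s c ≠ 0 := by
  constructor
  · intro hs c hc h0
    exact A_nzero hA (h0 ▸ A_meet hA hs hc)
  · intro h
    set B : Set S := {t | ∃ c ∈ A, nle (binf s c) t} with hB
    obtain ⟨a0, ha0⟩ := A_nonempty hA
    have hBfil : IsMFilter B := by
      refine ⟨⟨s, a0, ha0, binf_le_l s a0⟩, ?_, ?_⟩
      · rintro t1 ⟨c1, hc1, h1⟩ t2 ⟨c2, hc2, h2⟩
        refine ⟨binf c1 c2, A_meet hA hc1 hc2, ?_⟩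
        apply le_binf
        · exact nle_trans (le_binf (binf_le_l _ _)
            (nle_trans (binf_le_r _ _) (binf_le_l _ _))) h1
        · exact nle_trans (le_binf (binf_le_l _ _)
            (nle_trans (binf_le_r _ _) (binf_le_r _ _))) h2
      · rintro t1 ⟨c1, hc1, h1⟩ t2 h12
        exact ⟨c1, hc1, nle_trans h1 h12⟩
    have hB0 : (0 : S) ∉ B := by
      rintro ⟨c, hc, h0⟩
      exact h c hc (nle_zero h0)
    have hAB : A ⊆ B := fun a ha => ⟨a, ha, binf_le_r s a⟩
    have := hA.2.2 B hBfil hB0 hAB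
    rw [this]
    exact ⟨a0, ha0, binf_le_l s a0⟩

lemma A_prime {a b : S} (hab : Compat a b) (h : bsup a b ∈ A) : a ∈ A ∨ b ∈ A := by
  by_contra hcon
  push_neg at hcon
  obtain ⟨ha, hb⟩ := hcon
  have hac := (ultra_char hA).not.mp ha
  push_neg at hac
  obtain ⟨c, hc, hc0⟩ := hac
  have hbc := (ultra_char hA).not.mp hb
  push_neg at hbc
  obtain ⟨d, hd, hd0⟩ := hbc
  set m := binf c d with hm
  have hmA : m ∈ A := A_meet hA hc hd
  have hxA : binf (bsup a b) m ∈ A := A_meet hA h hmA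
  have hle : nle (binf (bsup a b) m) (bsup (binf a m) (binf b m)) := binf_bsup_le m hab
  have ham : binf a m = 0 := by
    apply nle_zero
    rw [← hc0]
    exact le_binf (binf_le_l _ _) (nle_trans (binf_le_r _ _) (binf_le_l _ _))
  have hbm : binf b m = 0 := by
    apply nle_zero
    rw [← hd0]
    exact le_binf (binf_le_l _ _) (nle_trans (binf_le_r _ _) (binf_le_r _ _))
  rw [ham, hbm, bsup_zero] at hle
  exact A_nzero hA ((nle_zero hle) ▸ hxA)

end Ultra

/-- the induced ultrafilter of idempotents -/
def dF (A : Set S) : Set S := {e | e * e = e ∧ ∃ a ∈ A, nle (a⁻¹ * a) e}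

section Fprops
variable {A : Set S} (hA : IsMUltrafilter A)

lemma F_idem {e : S} (he : e ∈ dF A) : e * e = e := he.1

include hA

lemma F_one : (1 : S) ∈ dF A := by
  obtain ⟨a, ha⟩ := A_nonempty hA
  exact ⟨one_mul 1, a, ha, idem_nle_one (idem_dd a)⟩

lemma F_mul {e f : S} (he : e ∈ dF A) (hf : f ∈ dF A) : e * f ∈ dF A := by
  obtain ⟨he1, a, ha, hae⟩ := he
  obtain ⟨hf1, b, hb, hbf⟩ := hf
  set c := binf a b with hc
  have hcA : c ∈ A := A_meet hA ha hb
  have h1 : nle (c⁻¹ * c) e := nle_trans (nle_d (binf_le_l a b)) hae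
  have h2 : nle (c⁻¹ * c) f := nle_trans (nle_d (binf_le_r a b)) hbf
  refine ⟨idem_mul he1 hf1, c, hcA, ?_⟩
  apply (idem_nle_iff (idem_dd c) (idem_mul he1 hf1)).mpr
  rw [← mul_assoc, (idem_nle_iff (idem_dd c) he1).mp h1, (idem_nle_iff (idem_dd c) hf1).mp h2]

lemma F_up {e f : S} (he : e ∈ dF A) (hf : f * f = f) (h : nle e f) : f ∈ dF A := by
  obtain ⟨he1, a, ha, hae⟩ := he
  exact ⟨hf, a, ha, nle_trans hae h⟩

lemma F_nzero : (0 : S) ∉ dF A := by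
  rintro ⟨-, a, ha, h0⟩
  have h1 : a⁻¹ * a = 0 := nle_zero h0
  have h2 : a = 0 := by rw [← aia' a, h1, mulz]
  exact A_nzero hA (h2 ▸ ha)

lemma F_d_mem {a : S} (ha : a ∈ A) : a⁻¹ * a ∈ dF A :=
  ⟨idem_dd a, a, ha, nle_refl _⟩

lemma F_prime {e f : S} (he : e * e = e) (hf : f * f = f) (h : bsup e f ∈ dF A) :
    e ∈ dF A ∨ f ∈ dF A := by
  obtain ⟨-, b, hb, hbe⟩ := h
  have hbd : b * bsup e f = b := (d_nle_iff (bsup_idem he hf)).mp hbe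
  have hdec : b = bsup (b * e) (b * f) := by
    rw [← mul_bsup b (compat_idem he hf), hbd]
  have hcomp : Compat (b * e) (b * f) := compat_mul_left b (compat_idem he hf)
  have := A_prime hA hcomp (hdec ▸ hb)
  rcases this with h1 | h1
  · left
    refine ⟨he, b * e, h1, (d_nle_iff he).mpr ?_⟩
    rw [mul_assoc, he]
  · right
    refine ⟨hf, b * f, h1, (d_nle_iff hf).mpr ?_⟩
    rw [mul_assoc, hf]

lemma F_compl {e : S} (he : e * e = e) : e ∈ dF A ∨ bcompl e ∈ dF A := by
  apply F_prime hA he (bcompl_idem he)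
  rw [bsup_bcompl he]
  exact F_one hA

lemma F_no_zero {e f : S} (he : e ∈ dF A) (hf : f ∈ dF A) (h : e * f = 0) : False :=
  F_nzero hA (h ▸ F_mul hA he hf)

lemma A_mul_idem {a e : S} (ha : a ∈ A) (he : e ∈ dF A) : a * e ∈ A := by
  obtain ⟨he1, b, hb, hbe⟩ := he
  apply (ultra_char hA).mpr
  intro c hc h0
  set m := binf (binf a c) b with hm
  have hmA : m ∈ A := A_meet hA (A_meet hA ha hc) hb
  have hma : nle m a := nle_trans (binf_le_l _ _) (binf_le_l a c)
  have hmc : nle m c := nle_trans (binf_le_l _ _) (binf_le_r a c)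
  have hmd : nle (m⁻¹ * m) e := nle_trans (nle_d (binf_le_r _ _)) hbe
  have hmae : nle m (a * e) := by
    apply nle_right'
    refine ⟨m⁻¹ * m, idem_dd m, ?_⟩
    have h1 : m = a * (m⁻¹ * m) := nle_right hma
    have h2 : (m⁻¹ * m) * e = m⁻¹ * m := (idem_nle_iff (idem_dd m) he1).mp hmd
    rw [mul_assoc]
    calc m = a * (m⁻¹ * m) := h1
      _ = a * ((m⁻¹ * m) * e) := by rw [h2]
      _ = a * (e * (m⁻¹ * m)) := by rw [idem_comm (idem_dd m) he1]
  have : nle m (binf (a * e) c) := le_binf hmae hmc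
  rw [h0] at this
  exact A_nzero hA ((nle_zero this) ▸ hmA)

end Fprops

end Sec5

section Sec6


variable {S : Type u} [BooleanInverseMeetMonoid S]

lemma infinitesimal_of {x : S} (hx : x ≠ 0) (h : (x⁻¹ * x) * (x * x⁻¹) = 0) :
    Infinitesimal x := by
  refine ⟨hx, ?_⟩
  calc x * x = (x * (x⁻¹ * x)) * ((x * x⁻¹) * x) := by rw [aia' x, aia x]
    _ = x * (((x⁻¹ * x) * (x * x⁻¹)) * x) := by simp only [mul_assoc]
    _ = 0 := by rw [h, zmul, mulz]

section WithA
variable {A : Set S} (hA : IsMUltrafilter A)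
include hA

lemma conj_split {a : S} (ha : a ∈ A) {k : S} (hk : k * k = k) :
    (∃ e ∈ dF A, (a * e * a⁻¹) * k = 0) ∨ (∃ e ∈ dF A, nle (a * e * a⁻¹) k) := by
  set k' := a⁻¹ * k * a with hk'
  have hk'i : k' * k' = k' := conj_idem' a hk
  rcases F_compl hA hk'i with hkF | hkF
  · right
    refine ⟨k' * (a⁻¹ * a), F_mul hA hkF (F_d_mem hA ha), ?_⟩
    have hcalc : a * (k' * (a⁻¹ * a)) * a⁻¹ = k * (a * a⁻¹) := by
      calc a * (k' * (a⁻¹ * a)) * a⁻¹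
          = (a * a⁻¹) * (k * ((a * (a⁻¹ * a)) * a⁻¹)) := by rw [hk']; simp only [mul_assoc]
        _ = (a * a⁻¹) * (k * (a * a⁻¹)) := by rw [aia']
        _ = k * ((a * a⁻¹) * (a * a⁻¹)) := by rw [swap (idem_comm (idem_rr a) hk)]
        _ = k * (a * a⁻¹) := by rw [idem_rr]
    rw [hcalc]
    exact mul_idem_nle_left hk (idem_rr a)
  · left
    refine ⟨bcompl k' * (a⁻¹ * a), F_mul hA hkF (F_d_mem hA ha), ?_⟩
    have hik : a⁻¹ * k = k' * a⁻¹ := by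
      calc a⁻¹ * k = (a⁻¹ * (a * a⁻¹)) * k := by rw [iai']
        _ = a⁻¹ * (k * (a * a⁻¹)) := by rw [mul_assoc, idem_comm (idem_rr a) hk]
        _ = k' * a⁻¹ := by rw [hk']; simp only [mul_assoc]
    calc (a * (bcompl k' * (a⁻¹ * a)) * a⁻¹) * k
        = a * (bcompl k' * ((a⁻¹ * (a * a⁻¹)) * k)) := by simp only [mul_assoc]
      _ = a * (bcompl k' * (a⁻¹ * k)) := by rw [iai']
      _ = a * (bcompl k' * (k' * a⁻¹)) := by rw [hik]
      _ = a * ((bcompl k' * k') * a⁻¹) := by simp only [mul_assoc]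
      _ = 0 := by rw [bcompl_mul hk'i, zmul, mulz]

lemma case1 {a f : S} (ha : a ∈ A) (hf : f ∈ dF A) (h0 : f * (a * f * a⁻¹) = 0) :
    ∃ x ∈ A, Infinitesimal x := by
  have hfi := F_idem hf
  set g := f * (a⁻¹ * a) with hg
  have hgF : g ∈ dF A := F_mul hA hf (F_d_mem hA ha)
  have hgi := F_idem hgF
  have hgf : nle g f := mul_idem_nle_left hfi (idem_dd a)
  have hgda : g * (a⁻¹ * a) = g := by
    rw [hg, mul_assoc, idem_dd]
  have hgag : g * (a * g * a⁻¹) = 0 :=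
    mul_eq_zero_mono hgi (conj_idem a hgi) hfi (conj_idem a hfi) hgf
      (nle_mul_right a⁻¹ (nle_mul_left a hgf)) h0
  have key : g * (a * g) = 0 := by
    calc g * (a * g) = g * (a * (g * (a⁻¹ * a))) := by rw [hgda]
      _ = (g * (a * g * a⁻¹)) * a := by simp only [mul_assoc]
      _ = 0 := by rw [hgag, zmul]
  refine ⟨a * g, A_mul_idem hA ha hgF, A_mem_ne_zero hA (A_mul_idem hA ha hgF), ?_⟩
  calc (a * g) * (a * g) = a * (g * (a * g)) := by simp only [mul_assoc]
    _ = 0 := by rw [key, mulz]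

lemma split_idem (hat : IdemAtomless S) {u₁ : S} (hu₁ : u₁ ∈ dF A) :
    ∃ u w : S, u ∈ dF A ∧ nle u u₁ ∧ w * w = w ∧ w ≠ 0 ∧ u * w = 0 := by
  have hu₁i := F_idem hu₁
  have hu₁0 : u₁ ≠ 0 := fun h => F_nzero hA (h ▸ hu₁)
  obtain ⟨f, hfi, hf0, hfle, hfne⟩ := hat u₁ hu₁i hu₁0
  have hfu : f * u₁ = f := (idem_nle_iff hfi hu₁i).mp hfle
  rcases F_compl hA hfi with hfF | hfF
  · refine ⟨f, bcompl f * u₁, hfF, hfle, idem_mul (bcompl_idem hfi) hu₁i, ?_, ?_⟩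
    · intro hzero
      apply hfne
      have hdec : u₁ = bsup (u₁ * f) (u₁ * bcompl f) := mul_decomp u₁ hfi
      rw [← idem_comm hfi hu₁i, hfu, ← idem_comm (bcompl_idem hfi) hu₁i, hzero,
        bsup_zero] at hdec
      exact hdec.symm
    · rw [← mul_assoc, mul_bcompl hfi, zmul]
  · refine ⟨bcompl f * u₁, f, F_mul hA hfF hu₁, mul_idem_nle_right (bcompl_idem hfi) hu₁i,
      hfi, hf0, ?_⟩
    rw [mul_assoc, idem_comm hu₁i hfi, hfu, bcompl_mul hfi]

end WithA

end Sec6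

section Sec7


variable {S : Type u} [BooleanInverseMeetMonoid S]

def lsup (l : List S) : S := l.foldr bsup 0

@[simp] lemma lsup_nil : lsup ([] : List S) = 0 := rfl
@[simp] lemma lsup_cons (b : S) (t : List S) : lsup (b :: t) = bsup b (lsup t) := rfl

lemma compat_lsup : ∀ (l : List S) (y : S), (∀ b ∈ l, Compat y b) →
    List.Pairwise Compat l → Compat y (lsup l)
  | [], y, _, _ => by simpa using compat_zero_right y
  | b :: t, y, h, hpw => by
    rw [lsup_cons]
    have hpt := (List.pairwise_cons.mp hpw)
    exact compat_bsup (h b (by simp)) (compat_lsup t y (fun c hc => h c (by simp [hc])) hpt.2)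
      (compat_lsup t b hpt.1 hpt.2)

lemma mem_nle_lsup : ∀ (l : List S), List.Pairwise Compat l → ∀ y ∈ l, nle y (lsup l)
  | b :: t, hpw, y, hy => by
    have hpt := (List.pairwise_cons.mp hpw)
    have hcb : Compat b (lsup t) := compat_lsup t b hpt.1 hpt.2
    rw [lsup_cons]
    rcases List.mem_cons.mp hy with rfl | hy'
    · exact le_bsup_l hcb
    · exact nle_trans (mem_nle_lsup t hpt.2 y hy') (le_bsup_r hcb)

lemma lsup_le_of {l : List S} (hpw : List.Pairwise Compat l) {c : S}
    (h : ∀ y ∈ l, nle y c) : nle (lsup l) c := by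
  induction l with
  | nil => simpa using zero_nle c
  | cons b t ih =>
    have hpt := (List.pairwise_cons.mp hpw)
    rw [lsup_cons]
    exact bsup_le (compat_lsup t b hpt.1 hpt.2) (h b (by simp))
      (ih hpt.2 (fun y hy => h y (by simp [hy])))

lemma lsup_mul_right {l : List S} (hpw : List.Pairwise Compat l) (c : S) :
    lsup l * c = lsup (l.map (· * c)) := by
  induction l with
  | nil => simpa using zmul c
  | cons b t ih =>
    have hpt := (List.pairwise_cons.mp hpw)
    rw [lsup_cons, List.map_cons, lsup_cons, bsup_mul c (compat_lsup t b hpt.1 hpt.2),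
      ih hpt.2]

lemma lsup_mul_left {l : List S} (hpw : List.Pairwise Compat l) (c : S) :
    c * lsup l = lsup (l.map (c * ·)) := by
  induction l with
  | nil => simpa using mulz c
  | cons b t ih =>
    have hpt := (List.pairwise_cons.mp hpw)
    rw [lsup_cons, List.map_cons, lsup_cons, mul_bsup c (compat_lsup t b hpt.1 hpt.2),
      ih hpt.2]

lemma lsup_append {l₁ l₂ : List S} (hpw : List.Pairwise Compat (l₁ ++ l₂)) :
    lsup (l₁ ++ l₂) = bsup (lsup l₁) (lsup l₂) := by
  induction l₁ with
  | nil => simp [zero_bsup]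
  | cons b t ih =>
    have hpw' := hpw
    rw [List.cons_append, List.pairwise_cons] at hpw'
    obtain ⟨hb, htl⟩ := hpw'
    have h3 := List.pairwise_append.mp htl
    rw [List.cons_append, lsup_cons, ih htl, lsup_cons]
    apply bsup_assoc
    · exact compat_lsup t b (fun c hc => hb c (by simp [hc])) h3.1
    · exact compat_lsup l₂ b (fun c hc => hb c (by simp [hc])) h3.2.1
    · apply compat_lsup l₂ (lsup t)
      · intro c hc
        exact compat_symm (compat_lsup t c (fun x hx => compat_symm (h3.2.2 x hx c hc)) h3.1)
      · exact h3.2.1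

lemma lsup_zero_of {l : List S} (h : ∀ y ∈ l, y = (0 : S)) : lsup l = 0 := by
  induction l with
  | nil => rfl
  | cons b t ih =>
    rw [lsup_cons, h b (by simp), zero_bsup]
    exact ih (fun y hy => h y (by simp [hy]))

/-- the ∨-ideal generated by `w` -/
def Jset (w : S) : Set S :=
  {z | ∃ l : List S, (∀ y ∈ l, ∃ s t : S, nle y (s * w * t)) ∧
    List.Pairwise Compat l ∧ z = lsup l}

lemma J_videal (w : S) : IsVIdeal (Jset w) := by
  constructor
  · constructor
    · exact ⟨0, [], by simp, List.Pairwise.nil, rfl⟩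
    · rintro z ⟨l, hgen, hpw, rfl⟩ s
      constructor
      · refine ⟨l.map (s * ·), ?_, ?_, (lsup_mul_left hpw s)⟩
        · rintro y hy
          obtain ⟨y', hy', rfl⟩ := List.mem_map.mp hy
          obtain ⟨p, q, hpq⟩ := hgen y' hy'
          refine ⟨s * p, q, ?_⟩
          have := nle_mul_left s hpq
          rwa [show s * (p * w * q) = s * p * w * q by simp only [mul_assoc]] at this
        · exact hpw.map _ (fun _ _ h => compat_mul_left s h)
      · refine ⟨l.map (· * s), ?_, ?_, (lsup_mul_right hpw s)⟩
        · rintro y hy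
          obtain ⟨y', hy', rfl⟩ := List.mem_map.mp hy
          obtain ⟨p, q, hpq⟩ := hgen y' hy'
          refine ⟨p, q * s, ?_⟩
          have := nle_mul_right s hpq
          rwa [show p * w * q * s = p * w * (q * s) by simp only [mul_assoc]] at this
        · exact hpw.map _ (fun _ _ h => compat_mul_right s h)
  · rintro z₁ ⟨l₁, hg₁, hp₁, rfl⟩ z₂ ⟨l₂, hg₂, hp₂, rfl⟩ hc
    have hpw : List.Pairwise Compat (l₁ ++ l₂) := by
      rw [List.pairwise_append]
      refine ⟨hp₁, hp₂, ?_⟩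
      intro x hx y hy
      exact compat_nle (mem_nle_lsup l₁ hp₁ x hx) (mem_nle_lsup l₂ hp₂ y hy) hc
    refine ⟨l₁ ++ l₂, ?_, hpw, (lsup_append hpw).symm⟩
    intro y hy
    rcases List.mem_append.mp hy with h | h
    · exact hg₁ y h
    · exact hg₂ y h

lemma w_mem_J {w : S} : w ∈ Jset w := by
  refine ⟨[w], ?_, List.pairwise_singleton _ _, by rw [lsup_cons, lsup_nil, bsup_zero]⟩
  intro y hy
  rw [List.mem_singleton] at hy
  exact ⟨1, 1, by rw [hy, one_mul, mul_one]; exact nle_refl w⟩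

lemma J_univ (h0 : ZeroSimplifying S) {w : S} (hw : w ≠ 0) : Jset w = Set.univ := by
  rcases h0 (Jset w) (J_videal w) with h | h
  · exfalso; apply hw
    have := @w_mem_J S _ w
    rw [h] at this
    exact this
  · exact h

section WithA
variable {A : Set S} (hA : IsMUltrafilter A)
include hA

lemma prod_compl_facts (l : List S) (h : ∀ y ∈ l, y * y = y ∧ bcompl y ∈ dF A) :
    (l.foldr (fun y acc => bcompl y * acc) 1) ∈ dF A ∧
    ∀ y ∈ l, y * (l.foldr (fun y acc => bcompl y * acc) 1) = 0 := by
  induction l with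
  | nil => exact ⟨F_one hA, by simp⟩
  | cons b t ih =>
    obtain ⟨ihc, ihz⟩ := ih (fun y hy => h y (by simp [hy]))
    have hb := h b (by simp)
    refine ⟨F_mul hA hb.2 ihc, ?_⟩
    intro y hy
    rcases List.mem_cons.mp hy with rfl | hy'
    · show y * (bcompl y * _) = 0
      rw [pull (mul_bcompl hb.1), zmul]
    · show y * (bcompl b * _) = 0
      rw [swap (idem_comm (h y hy).1 (bcompl_idem hb.1)), ihz y hy', mulz]

lemma exists_mem_F {l : List S} (hpw : List.Pairwise Compat l) (hu : lsup l ∈ dF A) :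
    ∃ y ∈ l, y ∈ dF A := by
  by_contra hcon
  push_neg at hcon
  have hidem : ∀ y ∈ l, y * y = y := by
    intro y hy
    exact nle_idem (F_idem hu) (mem_nle_lsup l hpw y hy)
  have hcompl : ∀ y ∈ l, y * y = y ∧ bcompl y ∈ dF A := by
    intro y hy
    refine ⟨hidem y hy, ?_⟩
    rcases F_compl hA (hidem y hy) with h | h
    · exact absurd h (hcon y hy)
    · exact h
  obtain ⟨hcF, hcz⟩ := prod_compl_facts hA l hcompl
  set c := l.foldr (fun y acc => bcompl y * acc) 1 with hc
  have : lsup l * c = 0 := by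
    rw [lsup_mul_right hpw c]
    apply lsup_zero_of
    intro y hy
    obtain ⟨y', hy', rfl⟩ := List.mem_map.mp hy
    exact hcz y' hy'
  exact F_nzero hA (this ▸ F_mul hA hu hcF)

end WithA

end Sec7

section Sec8

variable {S : Type u} [BooleanInverseMeetMonoid S]

lemma pencil_elem {w y s t : S} (hw : w * w = w) (hy : y * y = y)
    (hle : nle y (s * w * t)) :
    (w * t * y)⁻¹ * (w * t * y) = y ∧ nle ((w * t * y) * (w * t * y)⁻¹) w := by
  have hD : nle y ((s * w * t)⁻¹ * (s * w * t)) := by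
    have := nle_d hle
    rwa [inv_idem hy, hy] at this
  have hyD : y * ((s * w * t)⁻¹ * (s * w * t)) = y :=
    (idem_nle_iff hy (idem_dd _)).mp hD
  have hQ : w * ((s⁻¹ * s) * w) = w * (s⁻¹ * s) := by
    rw [idem_comm (idem_dd s) hw, pull hw]
  have hDform : (s * w * t)⁻¹ * (s * w * t) = t⁻¹ * ((w * (s⁻¹ * s)) * t) := by
    rw [mul_inv_rev', mul_inv_rev', inv_idem hw]
    calc t⁻¹ * (w * s⁻¹) * (s * w * t) = t⁻¹ * ((w * ((s⁻¹ * s) * w)) * t) := by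
          simp only [mul_assoc]
      _ = t⁻¹ * ((w * (s⁻¹ * s)) * t) := by rw [hQ]
  have hQw : (w * (s⁻¹ * s)) * w = w * (s⁻¹ * s) := by
    calc (w * (s⁻¹ * s)) * w = w * ((s⁻¹ * s) * w) := by rw [mul_assoc]
      _ = w * (s⁻¹ * s) := hQ
  have hDw : ((s * w * t)⁻¹ * (s * w * t)) * (t⁻¹ * (w * t)) = (s * w * t)⁻¹ * (s * w * t) := by
    rw [hDform]
    calc (t⁻¹ * ((w * (s⁻¹ * s)) * t)) * (t⁻¹ * (w * t))
        = t⁻¹ * ((w * (s⁻¹ * s)) * ((t * t⁻¹) * (w * t))) := by simp only [mul_assoc]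
      _ = t⁻¹ * ((w * (s⁻¹ * s)) * (w * ((t * t⁻¹) * t))) := by
            rw [swap (idem_comm (idem_rr t) hw)]
      _ = t⁻¹ * ((w * (s⁻¹ * s)) * (w * t)) := by rw [aia t]
      _ = t⁻¹ * (((w * (s⁻¹ * s)) * w) * t) := by simp only [mul_assoc]
      _ = t⁻¹ * ((w * (s⁻¹ * s)) * t) := by rw [hQw]
  have hyT : y * (t⁻¹ * (w * t)) = y := by
    calc y * (t⁻¹ * (w * t)) = (y * ((s * w * t)⁻¹ * (s * w * t))) * (t⁻¹ * (w * t)) := by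
            rw [hyD]
      _ = y * (((s * w * t)⁻¹ * (s * w * t)) * (t⁻¹ * (w * t))) := by rw [mul_assoc]
      _ = y * ((s * w * t)⁻¹ * (s * w * t)) := by rw [hDw]
      _ = y := hyD
  constructor
  · calc (w * t * y)⁻¹ * (w * t * y) = y * (t⁻¹ * (w * (w * (t * y)))) := by
            rw [mul_inv_rev', mul_inv_rev', inv_idem hy, inv_idem hw]; simp only [mul_assoc]
      _ = y * (t⁻¹ * (w * (t * y))) := by rw [pull hw]
      _ = (y * (t⁻¹ * (w * t))) * y := by simp only [mul_assoc]
      _ = y * y := by rw [hyT]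
      _ = y := hy
  · apply nle_right'
    refine ⟨t * y * t⁻¹, conj_idem t hy, ?_⟩
    calc (w * t * y) * (w * t * y)⁻¹ = w * (t * (y * (y * (t⁻¹ * w)))) := by
            rw [mul_inv_rev', mul_inv_rev', inv_idem hy, inv_idem hw]; simp only [mul_assoc]
      _ = w * (t * (y * (t⁻¹ * w))) := by rw [pull hy]
      _ = w * ((t * y * t⁻¹) * w) := by simp only [mul_assoc]
      _ = w * (w * (t * y * t⁻¹)) := by rw [idem_comm (conj_idem t hy) hw]
      _ = w * (t * y * t⁻¹) := by rw [pull hw]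


end Sec8

end St9

open St9

/-- In a 0-simplifying Tarski monoid every ultrafilter
contains an infinitesimal or a product of two infinitesimals. -/
theorem statement9 (S : Type u) [BooleanInverseMeetMonoid S] [Countable S]
    (hat : IdemAtomless S) (h0 : ZeroSimplifying S)
    (A : Set S) (hA : IsMUltrafilter A) :
    (∃ a ∈ A, Infinitesimal a) ∨
      ∃ a b : S, Infinitesimal a ∧ Infinitesimal b ∧ a * b ∈ A := by
  obtain ⟨a, ha⟩ := A_nonempty hA
  by_cases hc1 : ∃ f ∈ dF A, f * (a * f * a⁻¹) = 0
  · obtain ⟨f, hf, h0f⟩ := hc1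
    exact Or.inl (case1 hA ha hf h0f)
  · push_neg at hc1
    have hu₁ : a⁻¹ * a ∈ dF A := F_d_mem hA ha
    obtain ⟨u, w, huF, hule, hwi, hw0, huw⟩ := split_idem hA hat hu₁
    have hui := F_idem huF
    have hJ : u ∈ Jset w := by rw [J_univ h0 hw0]; trivial
    obtain ⟨l, hgen, hpw, hul⟩ := hJ
    have hluF : lsup l ∈ dF A := hul ▸ huF
    obtain ⟨y, hyl, hyF⟩ := exists_mem_F hA hpw hluF
    have hyi := F_idem hyF
    have hyu : nle y u := by rw [hul]; exact mem_nle_lsup l hpw y hyl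
    obtain ⟨s, t, hst⟩ := hgen y hyl
    obtain ⟨hdx, hrx⟩ := pencil_elem hwi hyi hst
    set x := w * t * y with hxdef
    clear_value x
    have he₁ex : ∃ e ∈ dF A, (a * e * a⁻¹) * w = 0 := by
      rcases conj_split hA ha hwi with h | h
      · exact h
      · exfalso
        obtain ⟨e, heF, hew⟩ := h
        have hwnF : w ∉ dF A := fun hwF => F_no_zero hA huF hwF huw
        have hcwF : bcompl w ∈ dF A := (F_compl hA hwi).resolve_left hwnF
        have hei := F_idem heF
        have hfF : e * bcompl w ∈ dF A := F_mul hA heF hcwF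
        have hfi := F_idem hfF
        have hfe : nle (e * bcompl w) e := mul_idem_nle_left hei (bcompl_idem hwi)
        have hfc : nle (e * bcompl w) (bcompl w) := mul_idem_nle_right hei (bcompl_idem hwi)
        have hconj : nle (a * (e * bcompl w) * a⁻¹) (a * e * a⁻¹) :=
          nle_mul_right a⁻¹ (nle_mul_left a hfe)
        have hzero : (e * bcompl w) * (a * (e * bcompl w) * a⁻¹) = 0 :=
          mul_eq_zero_mono hfi (conj_idem a hfi) (bcompl_idem hwi) hwi hfc
            (nle_trans hconj hew) (bcompl_mul hwi)
        exact hc1 (e * bcompl w) hfF hzero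
    obtain ⟨e₁, he₁F, he₁w⟩ := he₁ex
    have he₁i := F_idem he₁F
    set e := e₁ * y with hedef
    clear_value e
    have heF : e ∈ dF A := hedef ▸ F_mul hA he₁F hyF
    have hei := F_idem heF
    have hee₁ : nle e e₁ := hedef ▸ mul_idem_nle_left he₁i hyi
    have hey : nle e y := hedef ▸ mul_idem_nle_right he₁i hyi
    set x' := x * e with hx'def
    clear_value x'
    have hdx' : x'⁻¹ * x' = e := by
      calc x'⁻¹ * x' = e * ((x⁻¹ * x) * e) := by
            rw [hx'def, mul_inv_rev', inv_idem hei]; simp only [mul_assoc]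
        _ = e * (y * e) := by rw [hdx]
        _ = e * (e * y) := by rw [idem_comm hyi hei]
        _ = e * y := by rw [pull hei]
        _ = e := (idem_nle_iff hei hyi).mp hey
    have hx'e : x' * e = x' := by
      have h := aia' x'
      rwa [hdx'] at h
    have hx'0 : x' ≠ 0 := by
      intro h
      have hz : x'⁻¹ * x' = 0 := by rw [h, mulz]
      rw [hz] at hdx'
      exact F_nzero hA (by rw [hdx']; exact heF)
    have hrx' : nle (x' * x'⁻¹) w := by
      have hle1 : nle x' x := nle_right' ⟨e, hei, hx'def⟩
      exact nle_trans (nle_r hle1) hrx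
    have heu : nle e u := nle_trans hey hyu
    have hdr : (x'⁻¹ * x') * (x' * x'⁻¹) = 0 := by
      rw [hdx']
      exact mul_eq_zero_mono hei (idem_rr x') hui hwi heu hrx' huw
    have hinfx' : Infinitesimal x' := infinitesimal_of hx'0 hdr
    have hcx' : (a * x'⁻¹) * x' = a * e := by rw [mul_assoc, hdx']
    have haeA : a * e ∈ A := A_mul_idem hA ha heF
    have hc0 : a * x'⁻¹ ≠ 0 := by
      intro h
      apply A_mem_ne_zero hA haeA
      rw [← hcx', h, zmul]
    have heda : nle e (a⁻¹ * a) := nle_trans heu hule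
    have heda' : e * (a⁻¹ * a) = e := (idem_nle_iff hei (idem_dd a)).mp heda
    have hx'da : x' * (a⁻¹ * a) = x' := by
      calc x' * (a⁻¹ * a) = (x' * e) * (a⁻¹ * a) := by rw [hx'e]
        _ = x' * (e * (a⁻¹ * a)) := by rw [mul_assoc]
        _ = x' := by rw [heda', hx'e]
    have hdc : (a * x'⁻¹)⁻¹ * (a * x'⁻¹) = x' * x'⁻¹ := by
      calc (a * x'⁻¹)⁻¹ * (a * x'⁻¹) = x' * ((a⁻¹ * a) * x'⁻¹) := by
            rw [mul_inv_rev', invol]; simp only [mul_assoc]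
        _ = (x' * (a⁻¹ * a)) * x'⁻¹ := by rw [← mul_assoc]
        _ = x' * x'⁻¹ := by rw [hx'da]
    have hrc : (a * x'⁻¹) * (a * x'⁻¹)⁻¹ = a * e * a⁻¹ := by
      calc (a * x'⁻¹) * (a * x'⁻¹)⁻¹ = a * ((x'⁻¹ * x'⁻¹⁻¹) * a⁻¹) := by
            rw [mul_inv_rev']; simp only [mul_assoc]
        _ = a * ((x'⁻¹ * x') * a⁻¹) := by rw [invol]
        _ = a * (e * a⁻¹) := by rw [hdx']
        _ = a * e * a⁻¹ := by rw [← mul_assoc]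
    have hconj2 : nle (a * e * a⁻¹) (a * e₁ * a⁻¹) :=
      nle_mul_right a⁻¹ (nle_mul_left a hee₁)
    have hwz : w * (a * e₁ * a⁻¹) = 0 := by
      rw [idem_comm hwi (conj_idem a he₁i), he₁w]
    have hdrc : ((a * x'⁻¹)⁻¹ * (a * x'⁻¹)) * ((a * x'⁻¹) * (a * x'⁻¹)⁻¹) = 0 := by
      rw [hdc, hrc]
      exact mul_eq_zero_mono (idem_rr x') (conj_idem a hei) hwi (conj_idem a he₁i)
        hrx' hconj2 hwz
    have hinfc : Infinitesimal (a * x'⁻¹) := infinitesimal_of hc0 hdrc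
    exact Or.inr ⟨a * x'⁻¹, x', hinfc, hinfx', hcx' ▸ haeA⟩
end

section
/- Let S be a Boolean inverse ∧-monoid. Then S is piecewise factorizable if, and only if, every ultrafilter of S contains a unit. -/
universe u

namespace Statement10Aux

variable {S : Type u}

section IMZ
variable [InverseMonoidWithZero S]

lemma mim (a : S) : a * a⁻¹ * a = a := InverseMonoidWithZero.mul_inv_mul a
lemma imi (a : S) : a⁻¹ * a * a⁻¹ = a⁻¹ := InverseMonoidWithZero.inv_mul_inv a
lemma zmul (a : S) : (0 : S) * a = 0 := InverseMonoidWithZero.zero_mul' a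
lemma mulz (a : S) : a * (0 : S) = 0 := InverseMonoidWithZero.mul_zero' a

lemma dd_idem (a : S) : (a * a⁻¹) * (a * a⁻¹) = a * a⁻¹ := by
  rw [← mul_assoc, mim]
lemma rr_idem (a : S) : (a⁻¹ * a) * (a⁻¹ * a) = a⁻¹ * a := by
  rw [← mul_assoc, imi]

lemma inv_inv'' (a : S) : a⁻¹⁻¹ = a :=
  (InverseMonoidWithZero.inv_unique a⁻¹ a (imi a) (mim a)).symm

lemma idem_inv {e : S} (he : e * e = e) : e⁻¹ = e :=
  (InverseMonoidWithZero.inv_unique e e (by rw [he, he]) (by rw [he, he])).symm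

lemma zero_inv'' : (0 : S)⁻¹ = 0 := idem_inv (zmul 0)

lemma idem_cancel {e : S} (he : e * e = e) (t : S) : e * (e * t) = e * t := by
  rw [← mul_assoc, he]
lemma mim_t (a t : S) : a * (a⁻¹ * (a * t)) = a * t := by
  rw [← mul_assoc, ← mul_assoc, mim]
lemma imi_t (a t : S) : a⁻¹ * (a * (a⁻¹ * t)) = a⁻¹ * t := by
  rw [← mul_assoc, ← mul_assoc, imi]
lemma mim_a (a : S) : a * (a⁻¹ * a) = a := by rw [← mul_assoc, mim]
lemma imi_a (a : S) : a⁻¹ * (a * a⁻¹) = a⁻¹ := by rw [← mul_assoc, imi]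
lemma comm_mul {u v : S} (h : u * v = v * u) (t : S) : u * (v * t) = v * (u * t) := by
  rw [← mul_assoc, h, mul_assoc]

lemma idem_mul_idem {e f : S} (he : e * e = e) (hf : f * f = f) :
    (e * f) * (e * f) = e * f := by
  have h1 : (e*f) * (e*f)⁻¹ * (e*f) = e*f := mim _
  have h2t : ∀ t : S, (e*f)⁻¹ * (e * (f * ((e*f)⁻¹ * t))) = (e*f)⁻¹ * t := by
    intro t
    have h := congrArg (· * t) (imi (e*f))
    simpa only [mul_assoc] using h
  simp only [mul_assoc] at h1
  have hy : f * (e*f)⁻¹ * e = (e*f)⁻¹ := by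
    refine InverseMonoidWithZero.inv_unique (e*f) _ ?_ ?_
    · simp only [mul_assoc]
      rw [idem_cancel hf, idem_cancel he]
      exact h1
    · simp only [mul_assoc]
      rw [idem_cancel he, idem_cancel hf, h2t e]
  have hxi : (e*f)⁻¹ * (e*f)⁻¹ = (e*f)⁻¹ := by
    conv_lhs => rw [← hy]
    simp only [mul_assoc]
    rw [h2t e, ← mul_assoc, hy]
  have hef : e * f = (e*f)⁻¹ := (inv_inv'' (e*f)).symm.trans (idem_inv hxi)
  rw [hef]; exact hxi

lemma idem_comm {e f : S} (he : e * e = e) (hf : f * f = f) : e * f = f * e := by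
  have hef := idem_mul_idem he hf
  have hfe := idem_mul_idem hf he
  have g1 : (e*f) * (f*e) * (e*f) = e*f := by
    simp only [mul_assoc]
    rw [idem_cancel hf, idem_cancel he]
    simpa only [mul_assoc] using hef
  have g2 : (f*e) * (e*f) * (f*e) = f*e := by
    simp only [mul_assoc]
    rw [idem_cancel he, idem_cancel hf]
    simpa only [mul_assoc] using hfe
  have h := InverseMonoidWithZero.inv_unique (e*f) (f*e) g1 g2
  rw [idem_inv hef] at h
  exact h.symm

lemma mul_inv_rev'' (a b : S) : (a * b)⁻¹ = b⁻¹ * a⁻¹ := by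
  have hc : (b*b⁻¹) * (a⁻¹*a) = (a⁻¹*a) * (b*b⁻¹) := idem_comm (dd_idem b) (rr_idem a)
  refine (InverseMonoidWithZero.inv_unique (a*b) (b⁻¹*a⁻¹) ?_ ?_).symm
  · simp only [mul_assoc]
    rw [show b * (b⁻¹ * (a⁻¹ * (a * b))) = (b*b⁻¹) * ((a⁻¹*a) * b) by
      simp only [mul_assoc], comm_mul hc b]
    simp only [mul_assoc, mim_t, mim_a]
  · simp only [mul_assoc]
    rw [show a⁻¹ * (a * (b * (b⁻¹ * a⁻¹))) = (a⁻¹*a) * ((b*b⁻¹) * a⁻¹) by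
      simp only [mul_assoc], comm_mul hc.symm a⁻¹]
    simp only [mul_assoc, imi_t, imi_a]

lemma nle_refl (a : S) : nle a a := ⟨a * a⁻¹, dd_idem a, (mim a).symm⟩

lemma zero_nle (a : S) : nle 0 a := ⟨0, zmul 0, (zmul a).symm⟩

lemma nle_zero {a : S} (h : nle a 0) : a = 0 := by
  obtain ⟨e, -, rfl⟩ := h; exact mulz e

lemma nle_trans {a b c : S} (h1 : nle a b) (h2 : nle b c) : nle a c := by
  obtain ⟨f, hf, rfl⟩ := h2
  obtain ⟨e, he, rfl⟩ := h1
  exact ⟨e * f, idem_mul_idem he hf, (mul_assoc e f c).symm⟩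

lemma nle_eq_left {a b : S} (h : nle a b) : a = a * a⁻¹ * b := by
  obtain ⟨e, he, rfl⟩ := h
  have hc : (b*b⁻¹) * e = e * (b*b⁻¹) := idem_comm (dd_idem b) he
  rw [mul_inv_rev'', idem_inv he]
  rw [show e * b * (b⁻¹ * e) * b = e * ((b*b⁻¹) * (e * b)) by simp only [mul_assoc],
    comm_mul hc b, idem_cancel he, mim]

lemma nle_eq_right {a b : S} (h : nle a b) : a = b * (a⁻¹ * a) := by
  obtain ⟨e, he, rfl⟩ := h
  have hc : (b*b⁻¹) * e = e * (b*b⁻¹) := idem_comm (dd_idem b) he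
  rw [mul_inv_rev'', idem_inv he]
  rw [show b * (b⁻¹ * e * (e * b)) = b * (b⁻¹ * (e * (e * b))) by simp only [mul_assoc],
    idem_cancel he, ← mul_assoc, comm_mul hc b, mim]

lemma conj_idem {f : S} (hf : f * f = f) (b : S) :
    (b * f * b⁻¹) * (b * f * b⁻¹) = b * f * b⁻¹ := by
  have hc : f * (b⁻¹*b) = (b⁻¹*b) * f := idem_comm hf (rr_idem b)
  simp only [mul_assoc]
  rw [show f * (b⁻¹ * (b * (f * b⁻¹))) = f * ((b⁻¹*b) * (f * b⁻¹)) by simp only [mul_assoc],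
    comm_mul hc (f * b⁻¹), idem_cancel hf,
    show b * ((b⁻¹*b) * (f * b⁻¹)) = b * (b⁻¹ * (b * (f * b⁻¹))) by simp only [mul_assoc],
    mim_t]

lemma nle_of_right {b f : S} (hf : f * f = f) : nle (b * f) b := by
  have hc : f * (b⁻¹*b) = (b⁻¹*b) * f := idem_comm hf (rr_idem b)
  refine ⟨b * f * b⁻¹, conj_idem hf b, ?_⟩
  rw [show b * f * b⁻¹ * b = b * (f * (b⁻¹ * b)) by simp only [mul_assoc],
    hc, ← mul_assoc, mim_a]

lemma nle_mul {a b c d : S} (h1 : nle a b) (h2 : nle c d) : nle (a * c) (b * d) := by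
  obtain ⟨e, he, rfl⟩ := h1
  obtain ⟨f, hf, rfl⟩ := h2
  have hc : f * (b⁻¹*b) = (b⁻¹*b) * f := idem_comm hf (rr_idem b)
  refine ⟨e * (b * f * b⁻¹), idem_mul_idem he (conj_idem hf b), ?_⟩
  rw [show e * (b * f * b⁻¹) * (b * d) = e * (b * (f * ((b⁻¹*b) * d))) by simp only [mul_assoc],
    comm_mul hc d,
    show e * (b * ((b⁻¹*b) * (f * d))) = e * (b * (b⁻¹ * (b * (f * d)))) by simp only [mul_assoc],
    mim_t, mul_assoc]

lemma nle_inv {a b : S} (h : nle a b) : nle a⁻¹ b⁻¹ := by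
  have h2 := nle_eq_right h
  refine ⟨a⁻¹ * a, rr_idem a, ?_⟩
  conv_lhs => rw [h2]
  rw [mul_inv_rev'', idem_inv (rr_idem a)]

lemma nle_antisymm {a b : S} (h1 : nle a b) (h2 : nle b a) : a = b := by
  obtain ⟨e, he, h1⟩ := h1
  obtain ⟨f, hf, h2⟩ := h2
  have hb : b = f * (e * b) := h2.trans (by rw [h1])
  have hc : e * f = f * e := idem_comm he hf
  calc a = e * b := h1
    _ = e * (f * (e * b)) := by rw [← hb]
    _ = (e*f) * (e*b) := by simp only [mul_assoc]
    _ = (f*e) * (e*b) := by rw [hc]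
    _ = f * (e * (e * b)) := by simp only [mul_assoc]
    _ = f * (e * b) := by rw [idem_cancel he]
    _ = b := hb.symm

lemma nle_dd {a b : S} (h : nle a b) : nle (a⁻¹ * a) (b⁻¹ * b) := by
  refine ⟨a⁻¹ * a, rr_idem a, ?_⟩
  have h2 := nle_eq_right h
  have hc : (b⁻¹*b) * (a⁻¹*a) = (a⁻¹*a) * (b⁻¹*b) := idem_comm (rr_idem b) (rr_idem a)
  conv_lhs => rw [h2]
  rw [mul_inv_rev'', idem_inv (rr_idem a)]
  rw [show a⁻¹ * a * b⁻¹ * (b * (a⁻¹ * a)) = (a⁻¹*a) * ((b⁻¹*b) * (a⁻¹*a)) by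
    simp only [mul_assoc], hc, idem_cancel (rr_idem a)]

lemma idem_nle_one {e : S} (he : e * e = e) : nle e 1 := ⟨e, he, (mul_one e).symm⟩

lemma idem_nle_mul {x e : S} (hx : x * x = x) (h : nle x e) : x = x * e := by
  have h2 := nle_eq_left h
  rwa [idem_inv hx, hx] at h2

lemma compat_of_common {a b s : S} (ha : nle a s) (hb : nle b s) : Compat a b := by
  constructor
  · obtain ⟨e, he, rfl⟩ := ha
    obtain ⟨f, hf, rfl⟩ := hb
    have key : (e*s) * (f*s)⁻¹ = (e * (s * s⁻¹)) * f := by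
      rw [mul_inv_rev'', idem_inv hf]
      simp only [mul_assoc]
    rw [key]
    exact idem_mul_idem (idem_mul_idem he (dd_idem s)) hf
  · have h2a := nle_eq_right ha
    have h2b := nle_eq_right hb
    have key : a⁻¹ * b = ((a⁻¹*a) * (s⁻¹*s)) * (b⁻¹*b) := by
      conv_lhs => rw [h2a, h2b]
      rw [mul_inv_rev'', idem_inv (rr_idem a)]
      simp only [mul_assoc]
    rw [key]
    exact idem_mul_idem (idem_mul_idem (rr_idem a) (rr_idem s)) (rr_idem b)

end IMZ

section DIM
variable [DistributiveInverseMonoid S]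

lemma le_bsup_left {a b : S} (h : Compat a b) : nle a (bsup a b) :=
  DistributiveInverseMonoid.le_sup_left a b h
lemma le_bsup_right {a b : S} (h : Compat a b) : nle b (bsup a b) :=
  DistributiveInverseMonoid.le_sup_right a b h
lemma bsup_nle {a b c : S} (h : Compat a b) (ha : nle a c) (hb : nle b c) :
    nle (bsup a b) c :=
  DistributiveInverseMonoid.sup_le a b c h ha hb
lemma mul_bsup {a b : S} (h : Compat a b) (c : S) :
    c * bsup a b = bsup (c * a) (c * b) :=
  DistributiveInverseMonoid.mul_sup a b c h

lemma compat_zero_right (a : S) : Compat a 0 := by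
  constructor
  · rw [zero_inv'', mulz, zmul]
  · rw [mulz, zmul]
lemma compat_zero_left (a : S) : Compat 0 a := by
  constructor
  · rw [zmul, zmul]
  · rw [zero_inv'', zmul, zmul]

lemma bsup_zero (a : S) : bsup a 0 = a :=
  nle_antisymm (bsup_nle (compat_zero_right a) (nle_refl a) (zero_nle a))
    (le_bsup_left (compat_zero_right a))
lemma zero_bsup (a : S) : bsup 0 a = a :=
  nle_antisymm (bsup_nle (compat_zero_left a) (zero_nle a) (nle_refl a))
    (le_bsup_right (compat_zero_left a))

lemma compat_idem {e f : S} (he : e * e = e) (hf : f * f = f) : Compat e f :=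
  ⟨by rw [idem_inv hf]; exact idem_mul_idem he hf,
   by rw [idem_inv he]; exact idem_mul_idem he hf⟩

lemma idem_bsup {e f : S} (he : e * e = e) (hf : f * f = f) :
    (bsup e f) * (bsup e f) = bsup e f := by
  have hc := compat_idem he hf
  have h1 : bsup e f * e = e := by
    have h := nle_eq_right (le_bsup_left hc)
    rw [idem_inv he, he] at h
    exact h.symm
  have h2 : bsup e f * f = f := by
    have h := nle_eq_right (le_bsup_right hc)
    rw [idem_inv hf, hf] at h
    exact h.symm
  calc bsup e f * bsup e f = bsup (bsup e f * e) (bsup e f * f) := mul_bsup hc _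
    _ = bsup e f := by rw [h1, h2]

end DIM

def listSup [DistributiveInverseMonoid S] (l : List S) : S := l.foldr bsup 0

section ListSup
variable [DistributiveInverseMonoid S]

lemma listSup_nle {l : List S} {c : S} (h : ∀ x ∈ l, nle x c) : nle (listSup l) c := by
  induction l with
  | nil => exact zero_nle c
  | cons a t ih =>
    have ha := h a (List.mem_cons_self)
    have ht : nle (listSup t) c := ih (fun x hx => h x (List.mem_cons_of_mem a hx))
    exact bsup_nle (compat_of_common ha ht) ha ht

lemma le_listSup {l : List S} {u : S} (hub : ∀ x ∈ l, nle x u) :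
    ∀ x ∈ l, nle x (listSup l) := by
  induction l with
  | nil => intro x hx; exact absurd hx List.not_mem_nil
  | cons a t ih =>
    have hcp : Compat a (listSup t) :=
      compat_of_common (hub a (List.mem_cons_self))
        (listSup_nle (fun x hx => hub x (List.mem_cons_of_mem a hx)))
    intro x hx
    rcases List.mem_cons.mp hx with rfl | hx'
    · exact le_bsup_left hcp
    · exact nle_trans (ih (fun y hy => hub y (List.mem_cons_of_mem a hy)) x hx')
        (le_bsup_right hcp)

lemma mul_listSup {l : List S} {u : S} (hub : ∀ x ∈ l, nle x u) (c : S) :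
    c * listSup l = listSup (l.map (c * ·)) := by
  induction l with
  | nil => exact mulz c
  | cons a t ih =>
    have hcp : Compat a (listSup t) :=
      compat_of_common (hub a (List.mem_cons_self))
        (listSup_nle (fun x hx => hub x (List.mem_cons_of_mem a hx)))
    show c * bsup a (listSup t) = bsup (c * a) (listSup (t.map (c * ·)))
    rw [mul_bsup hcp, ih (fun x hx => hub x (List.mem_cons_of_mem a hx))]

end ListSup

section BIM
variable [BooleanInverseMonoid S]

lemma bcompl_idem {e : S} (he : e * e = e) : bcompl e * bcompl e = bcompl e :=
  BooleanInverseMonoid.compl_idem e he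
lemma mul_bcompl {e : S} (he : e * e = e) : e * bcompl e = 0 :=
  BooleanInverseMonoid.mul_compl e he
lemma bsup_bcompl {e : S} (he : e * e = e) : bsup e (bcompl e) = 1 :=
  BooleanInverseMonoid.sup_compl e he

/-- If `x` is idempotent and `x * e = 0` then `x ≤ bcompl e`. -/
lemma nle_bcompl {x e : S} (hx : x * x = x) (he : e * e = e) (h : x * e = 0) :
    nle x (bcompl e) := by
  have h1 : x = x * bcompl e := by
    calc x = x * 1 := (mul_one x).symm
      _ = x * bsup e (bcompl e) := by rw [bsup_bcompl he]
      _ = bsup (x * e) (x * bcompl e) := mul_bsup (compat_idem he (bcompl_idem he)) x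
      _ = x * bcompl e := by rw [h, zero_bsup]
  exact ⟨x, hx, h1⟩

/-- If `x` is idempotent and `x * bcompl e = 0` then `x ≤ e`. -/
lemma nle_of_bcompl_zero {x e : S} (hx : x * x = x) (he : e * e = e)
    (h : x * bcompl e = 0) : nle x e := by
  have h1 : x = x * e := by
    calc x = x * 1 := (mul_one x).symm
      _ = x * bsup e (bcompl e) := by rw [bsup_bcompl he]
      _ = bsup (x * e) (x * bcompl e) := mul_bsup (compat_idem he (bcompl_idem he)) x
      _ = x * e := by rw [h, bsup_zero]
  exact ⟨x, hx, h1⟩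

end BIM

section BIMM
variable [BooleanInverseMeetMonoid S]

lemma binf_le_left (a b : S) : nle (binf a b) a :=
  BooleanInverseMeetMonoid.inf_le_left a b
lemma binf_le_right (a b : S) : nle (binf a b) b :=
  BooleanInverseMeetMonoid.inf_le_right a b
lemma le_binf {a b c : S} (h1 : nle c a) (h2 : nle c b) : nle c (binf a b) :=
  BooleanInverseMeetMonoid.le_inf a b c h1 h2

/-- Common lower bounds of `s*e` and `s*f` are zero when `e*f = 0`. -/
lemma lb_zero {e f s c : S} (he : e * e = e) (hf : f * f = f) (hef : e * f = 0)
    (h1 : nle c (s * e)) (h2 : nle c (s * f)) : c = 0 := by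
  have key : ∀ {g : S}, g * g = g → ∀ {x : S}, nle x (s * g) → nle (x⁻¹ * x) g := by
    intro g hg x hx
    have hdd := nle_dd hx
    have heq : (s*g)⁻¹ * (s*g) = (s⁻¹*s) * g := by
      have hc : g * (s⁻¹*s) = (s⁻¹*s) * g := idem_comm hg (rr_idem s)
      rw [mul_inv_rev'', idem_inv hg,
        show g * s⁻¹ * (s * g) = g * ((s⁻¹*s) * g) by simp only [mul_assoc],
        comm_mul hc g, hg]
    rw [heq] at hdd
    exact nle_trans hdd ⟨s⁻¹ * s, rr_idem s, rfl⟩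
  have h3 : c⁻¹ * c = (c⁻¹*c) * e := idem_nle_mul (rr_idem c) (key he h1)
  have h4 : c⁻¹ * c = (c⁻¹*c) * f := idem_nle_mul (rr_idem c) (key hf h2)
  have h5 : c⁻¹ * c = 0 := by
    calc c⁻¹ * c = (c⁻¹*c) * f * e := by rw [← h4, ← h3]
      _ = (c⁻¹*c) * (f * e) := mul_assoc _ _ _
      _ = (c⁻¹*c) * (e * f) := by rw [idem_comm hf he]
      _ = 0 := by rw [hef, mulz]
  calc c = c * (c⁻¹ * c) := (mim_a c).symm
    _ = 0 := by rw [h5, mulz]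

lemma filter_up {A : Set S} (hA : IsMFilter A) {a b : S} (ha : a ∈ A) (h : nle a b) :
    b ∈ A := hA.2.2 a ha b h

lemma exists_ultra {F : Set S} (hF : IsMFilter F) (h0 : (0:S) ∉ F) :
    ∃ A : Set S, F ⊆ A ∧ IsMUltrafilter A := by
  have key : ∀ c ⊆ {B : Set S | IsMFilter B ∧ (0:S) ∉ B ∧ F ⊆ B},
      IsChain (· ⊆ ·) c → c.Nonempty →
      ∃ ub ∈ {B : Set S | IsMFilter B ∧ (0:S) ∉ B ∧ F ⊆ B}, ∀ s ∈ c, s ⊆ ub := by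
    intro c hcsub hchain hcne
    obtain ⟨B0, hB0⟩ := hcne
    refine ⟨⋃₀ c, ⟨⟨?_, ?_, ?_⟩, ?_, ?_⟩, fun s hs => Set.subset_sUnion_of_mem hs⟩
    · obtain ⟨x, hx⟩ := (hcsub hB0).1.1
      exact ⟨x, B0, hB0, hx⟩
    · rintro a ⟨Ba, hBa, haB⟩ b ⟨Bb, hBb, hbB⟩
      rcases eq_or_ne Ba Bb with rfl | hne
      · exact ⟨Ba, hBa, (hcsub hBa).1.2.1 a haB b hbB⟩
      · rcases hchain hBa hBb hne with hsub | hsub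
        · exact ⟨Bb, hBb, (hcsub hBb).1.2.1 a (hsub haB) b hbB⟩
        · exact ⟨Ba, hBa, (hcsub hBa).1.2.1 a haB b (hsub hbB)⟩
    · rintro a ⟨Ba, hBa, haB⟩ b hab
      exact ⟨Ba, hBa, (hcsub hBa).1.2.2 a haB b hab⟩
    · rintro ⟨Ba, hBa, h0B⟩
      exact (hcsub hBa).2.1 h0B
    · exact (hcsub hB0).2.2.trans (Set.subset_sUnion_of_mem hB0)
  obtain ⟨A, hFA, hmax⟩ := zorn_subset_nonempty
      {B : Set S | IsMFilter B ∧ (0:S) ∉ B ∧ F ⊆ B} key F ⟨hF, h0, subset_rfl⟩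
  refine ⟨A, hFA, hmax.prop.1, hmax.prop.2.1, ?_⟩
  intro B hB h0B hAB
  exact Set.Subset.antisymm hAB (hmax.2 ⟨hB, h0B, hmax.prop.2.2.trans hAB⟩ hAB)

lemma ultra_notmem {A : Set S} (hA : IsMUltrafilter A) {a : S} (ha : a ∉ A) :
    ∃ t ∈ A, binf t a = 0 := by
  by_contra hcon
  push_neg at hcon
  obtain ⟨s0, hs0⟩ := hA.1.1
  have hFB : IsMFilter {c : S | ∃ t ∈ A, nle (binf t a) c} := by
    refine ⟨⟨a, s0, hs0, binf_le_right _ _⟩, ?_, ?_⟩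
    · rintro x ⟨t, htA, htx⟩ y ⟨t', ht'A, ht'y⟩
      refine ⟨binf t t', hA.1.2.1 t htA t' ht'A, ?_⟩
      have k1 : nle (binf (binf t t') a) (binf t a) :=
        le_binf (nle_trans (binf_le_left _ _) (binf_le_left _ _)) (binf_le_right _ _)
      have k2 : nle (binf (binf t t') a) (binf t' a) :=
        le_binf (nle_trans (binf_le_left _ _) (binf_le_right _ _)) (binf_le_right _ _)
      exact le_binf (nle_trans k1 htx) (nle_trans k2 ht'y)
    · rintro x ⟨t, htA, htx⟩ y hxy
      exact ⟨t, htA, nle_trans htx hxy⟩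
  have h0B : (0:S) ∉ {c : S | ∃ t ∈ A, nle (binf t a) c} := by
    rintro ⟨t, htA, ht0⟩
    exact hcon t htA (nle_zero ht0)
  have hAB : A ⊆ {c : S | ∃ t ∈ A, nle (binf t a) c} :=
    fun t htA => ⟨t, htA, binf_le_left _ _⟩
  have heq := hA.2.2 _ hFB h0B hAB
  apply ha
  rw [heq]
  exact ⟨s0, hs0, binf_le_right _ _⟩

end BIMM

section Main
variable [BooleanInverseMeetMonoid S]

lemma bcompl_antitone {e g : S} (he : e * e = e) (hg : g * g = g) (h : nle e g) :
    nle (bcompl g) (bcompl e) := by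
  have h0 : bcompl g * e = 0 := by
    apply nle_zero
    have h1 : nle (bcompl g * e) (bcompl g * g) := nle_mul (nle_refl _) h
    rwa [idem_comm (bcompl_idem hg) hg, mul_bcompl hg] at h1
  exact nle_bcompl (bcompl_idem hg) he h0

lemma forward_dir (hPF : PiecewiseFactorizable S) {A : Set S} (hA : IsMUltrafilter A) :
    ∃ g ∈ A, IsUnit g := by
  obtain ⟨s, hsA⟩ := hA.1.1
  obtain ⟨l, hlne, hunit, hle, hlub⟩ := hPF s
  have hfold : s = listSup l :=
    nle_antisymm (hlub _ (le_listSup hle)) (listSup_nle hle)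
  have hex : ∃ x ∈ l, x ∈ A := by
    by_contra hno
    push_neg at hno
    have haux : ∀ m : List S, (∀ x ∈ m, x ∉ A) →
        ∃ t ∈ A, nle t s ∧ ∀ x ∈ m, binf t x = 0 := by
      intro m
      induction m with
      | nil =>
        intro _
        exact ⟨s, hsA, nle_refl s, fun x hx => absurd hx List.not_mem_nil⟩
      | cons a as ih =>
        intro hm
        obtain ⟨t, htA, hts, hz⟩ := ih (fun x hx => hm x (List.mem_cons_of_mem a hx))
        obtain ⟨t', ht'A, ht'0⟩ := ultra_notmem hA (hm a (List.mem_cons_self))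
        refine ⟨binf t t', hA.1.2.1 t htA t' ht'A,
          nle_trans (binf_le_left t t') hts, ?_⟩
        intro x hx
        rcases List.mem_cons.mp hx with rfl | hx'
        · apply nle_zero
          rw [← ht'0]
          exact le_binf (nle_trans (binf_le_left _ _) (binf_le_right _ _))
            (binf_le_right _ _)
        · apply nle_zero
          rw [← hz x hx']
          exact le_binf (nle_trans (binf_le_left _ _) (binf_le_left _ _))
            (binf_le_right _ _)
    obtain ⟨t, htA, hts, hz⟩ := haux l hno
    have h1 : t = t * t⁻¹ * s := nle_eq_left hts
    have hzero_map : ∀ y ∈ l.map ((t * t⁻¹) * ·), nle y 0 := by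
      intro y hy
      obtain ⟨x, hxl, rfl⟩ := List.mem_map.mp hy
      have hxt : nle ((t * t⁻¹) * x) t := by
        have hx_eq := nle_eq_left (hle x hxl)
        have hc : (t*t⁻¹) * (x*x⁻¹) = (x*x⁻¹) * (t*t⁻¹) := idem_comm (dd_idem t) (dd_idem x)
        refine ⟨x * x⁻¹, dd_idem x, ?_⟩
        calc (t*t⁻¹) * x = (t*t⁻¹) * (x * x⁻¹ * s) := by rw [← hx_eq]
          _ = (x*x⁻¹) * (t * t⁻¹ * s) := by
              rw [show (t*t⁻¹) * (x * x⁻¹ * s) = (t*t⁻¹) * ((x*x⁻¹) * s) by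
                simp only [mul_assoc], comm_mul hc s, ← mul_assoc, ← mul_assoc,
                mul_assoc (x*x⁻¹)]
          _ = (x*x⁻¹) * t := by rw [← h1]
      have hxx : nle ((t*t⁻¹) * x) x := ⟨t * t⁻¹, dd_idem t, rfl⟩
      rw [show (0:S) = binf t x from (hz x hxl).symm]
      exact le_binf hxt hxx
    have h4 : t = listSup (l.map ((t * t⁻¹) * ·)) := by
      rw [← mul_listSup hle (t * t⁻¹), ← hfold]
      exact h1
    have ht0 : t = 0 := h4.trans (nle_zero (listSup_nle hzero_map))
    exact hA.2.1 (ht0 ▸ htA)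
  obtain ⟨x, hxl, hxA⟩ := hex
  obtain ⟨g, hgU, hxg⟩ := hunit x hxl
  exact ⟨g, filter_up hA.1 hxA hxg, hgU⟩

variable (S) in
def Jset (s : S) : Set S := {e | e * e = e ∧ ∃ g : S, IsUnit g ∧ nle (s * e) g}

variable (S) in
def Kset (s : S) : Set S :=
  {e | e * e = e ∧ ∃ m : List S, m ≠ [] ∧ (∀ x ∈ m, x ∈ Jset S s) ∧ nle e (listSup m)}

lemma backward_key (hU : ∀ A : Set S, IsMUltrafilter A → ∃ g ∈ A, IsUnit g) (s : S) :
    ∃ m : List S, m ≠ [] ∧ (∀ x ∈ m, x ∈ Jset S s) ∧ nle (s⁻¹ * s) (listSup m) := by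
  suffices hsK : s⁻¹ * s ∈ Kset S s by
    obtain ⟨-, m, hne, hmJ, hle⟩ := hsK
    exact ⟨m, hne, hmJ, hle⟩
  by_contra hcon
  have hJ0 : (0:S) ∈ Jset S s :=
    ⟨zmul 0, 1, isUnit_one, by rw [mulz]; exact zero_nle 1⟩
  have hJK : Jset S s ⊆ Kset S s := by
    intro e he
    refine ⟨he.1, [e], by simp, ?_, ?_⟩
    · intro x hx
      rw [List.mem_singleton] at hx
      exact hx ▸ he
    · show nle e (bsup e 0)
      rw [bsup_zero]
      exact nle_refl e
  have hK0 : (0:S) ∈ Kset S s := hJK hJ0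
  have hub1 : ∀ (m : List S), (∀ x ∈ m, x ∈ Jset S s) → ∀ x ∈ m, nle x (1:S) :=
    fun m hm x hx => idem_nle_one (hm x hx).1
  have hKjoin : ∀ e ∈ Kset S s, ∀ f ∈ Kset S s, bsup e f ∈ Kset S s := by
    rintro e ⟨he, m1, hne1, hm1J, hle1⟩ f ⟨hf, m2, hne2, hm2J, hle2⟩
    have hmJ : ∀ x ∈ m1 ++ m2, x ∈ Jset S s := by
      intro x hx
      rcases List.mem_append.mp hx with h | h
      · exact hm1J x h
      · exact hm2J x h
    have hsub1 : nle (listSup m1) (listSup (m1 ++ m2)) :=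
      listSup_nle (fun x hx => le_listSup (hub1 _ hmJ) x (List.mem_append_left m2 hx))
    have hsub2 : nle (listSup m2) (listSup (m1 ++ m2)) :=
      listSup_nle (fun x hx => le_listSup (hub1 _ hmJ) x (List.mem_append_right m1 hx))
    exact ⟨idem_bsup he hf, m1 ++ m2, by simp [hne1], hmJ,
      bsup_nle (compat_idem he hf) (nle_trans hle1 hsub1) (nle_trans hle2 hsub2)⟩
  -- the filter F
  have hFfilter : IsMFilter {t : S | ∃ e ∈ Kset S s, nle (s * bcompl e) t} := by
    refine ⟨⟨s, 0, hK0, nle_of_right (bcompl_idem (zmul 0))⟩, ?_, ?_⟩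
    · rintro x ⟨e, heK, hex⟩ y ⟨f, hfK, hfy⟩
      refine ⟨bsup e f, hKjoin e heK f hfK, ?_⟩
      have hbc1 : nle (bcompl (bsup e f)) (bcompl e) :=
        bcompl_antitone heK.1 (idem_bsup heK.1 hfK.1) (le_bsup_left (compat_idem heK.1 hfK.1))
      have hbc2 : nle (bcompl (bsup e f)) (bcompl f) :=
        bcompl_antitone hfK.1 (idem_bsup heK.1 hfK.1) (le_bsup_right (compat_idem heK.1 hfK.1))
      exact le_binf
        (nle_trans (nle_mul (nle_refl s) hbc1) hex)
        (nle_trans (nle_mul (nle_refl s) hbc2) hfy)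
    · rintro x ⟨e, heK, hex⟩ y hxy
      exact ⟨e, heK, nle_trans hex hxy⟩
  have h0F : (0:S) ∉ {t : S | ∃ e ∈ Kset S s, nle (s * bcompl e) t} := by
    rintro ⟨e, heK, he0⟩
    have hz : s * bcompl e = 0 := nle_zero he0
    have hz2 : (s⁻¹ * s) * bcompl e = 0 := by
      rw [mul_assoc, hz, mulz]
    have hle : nle (s⁻¹ * s) e := nle_of_bcompl_zero (rr_idem s) heK.1 hz2
    obtain ⟨-, m, hne, hmJ, hlem⟩ := heK
    exact hcon ⟨rr_idem s, m, hne, hmJ, nle_trans hle hlem⟩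
  obtain ⟨A, hFA, hA⟩ := exists_ultra hFfilter h0F
  obtain ⟨g, hgA, hgU⟩ := hU A hA
  have hsA : s ∈ A := hFA ⟨0, hK0, nle_of_right (bcompl_idem (zmul 0))⟩
  have htA : binf g s ∈ A := hA.1.2.1 g hgA s hsA
  have heq : binf g s = s * ((binf g s)⁻¹ * (binf g s)) := nle_eq_right (binf_le_right g s)
  have he'J : (binf g s)⁻¹ * (binf g s) ∈ Jset S s := by
    refine ⟨rr_idem _, g, hgU, ?_⟩
    rw [← heq]
    exact binf_le_left g s
  have hcF : s * bcompl ((binf g s)⁻¹ * (binf g s)) ∈ A :=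
    hFA ⟨_, hJK he'J, nle_refl _⟩
  have huA : binf (binf g s) (s * bcompl ((binf g s)⁻¹ * (binf g s))) ∈ A :=
    hA.1.2.1 _ htA _ hcF
  have hu0 : binf (binf g s) (s * bcompl ((binf g s)⁻¹ * (binf g s))) = 0 := by
    refine lb_zero (s := s) (rr_idem (binf g s)) (bcompl_idem (rr_idem (binf g s)))
      (mul_bcompl (rr_idem (binf g s))) ?_ ?_
    · exact nle_trans (binf_le_left _ _) (by rw [← heq]; exact nle_refl _)
    · exact binf_le_right _ _
  exact hA.2.1 (hu0 ▸ huA)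

lemma backward_dir (hU : ∀ A : Set S, IsMUltrafilter A → ∃ g ∈ A, IsUnit g) :
    PiecewiseFactorizable S := by
  intro s
  obtain ⟨m, hne, hmJ, hle⟩ := backward_key hU s
  have hub : ∀ x ∈ m, nle x (1:S) := fun x hx => idem_nle_one (hmJ x hx).1
  have hfold : s = listSup (m.map (s * ·)) := by
    have h1 : s⁻¹ * s = s⁻¹ * s * listSup m := by
      have h := nle_eq_left hle
      rwa [idem_inv (rr_idem s), rr_idem s] at h
    calc s = s * (s⁻¹ * s) := (mim_a s).symm
      _ = s * (s⁻¹ * s * listSup m) := by rw [← h1]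
      _ = s * (s⁻¹ * s) * listSup m := by simp only [mul_assoc]
      _ = s * listSup m := by rw [mim_a]
      _ = listSup (m.map (s * ·)) := mul_listSup hub s
  refine ⟨m.map (s * ·), by simpa using hne, ?_, ?_, ?_⟩
  · intro x hx
    obtain ⟨y, hym, rfl⟩ := List.mem_map.mp hx
    obtain ⟨hyi, g, hgU, hyg⟩ := hmJ y hym
    exact ⟨g, hgU, hyg⟩
  · intro x hx
    obtain ⟨y, hym, rfl⟩ := List.mem_map.mp hx
    exact nle_of_right (hmJ y hym).1
  · intro c hc
    rw [hfold]
    exact listSup_nle hc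

end Main

end Statement10Aux



/-- A Boolean inverse ∧-monoid is piecewise factorizable iff
every ultrafilter of `S` contains a unit. -/
theorem statement10 (S : Type u) [BooleanInverseMeetMonoid S] :
    PiecewiseFactorizable S ↔
      ∀ A : Set S, IsMUltrafilter A → ∃ g ∈ A, IsUnit g := by
  exact ⟨fun hPF A hA => Statement10Aux.forward_dir hPF hA, Statement10Aux.backward_dir⟩
end
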